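/- arXiv:2108.10522 — 5 statements merged into one kernel-verified Lean document; each statement's English description precedes it below -/
import Mathlib

section
/- On a non-degenerate triangle T, the divergence-free subspace Z_T of P^{2-}(T) has dimension 6 and is spanned by the six functions w_{T,e_i} := curl(λ_j λ_k (3λ_i − 1)) and w_{T,e_j,e_k} := curl(λ_i^2) for {i,j,k} = {1,2,3}. -/
open MeasureTheory
open scoped Classical

noncomputable section

/-- The plane. -/
abbrev V2 : Type := ℝ × ℝ

/-- Euclidean dot product on the plane. -/
def dot2 (u v : V2) : ℝ := u.1 * v.1 + u.2 * v.2

/-- 2D cross product. -/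
def cross2 (u v : V2) : ℝ := u.1 * v.2 - u.2 * v.1

/-- Euclidean norm on the plane. -/
def enorm2 (u : V2) : ℝ := Real.sqrt (u.1 ^ 2 + u.2 ^ 2)

/-- `f` is (the restriction of) a polynomial of total degree at most `k`. -/
def IsPolyDeg (k : ℕ) (f : V2 → ℝ) : Prop :=
  ∃ p : MvPolynomial (Fin 2) ℝ, p.totalDegree ≤ k ∧
    ∀ x : V2, f x = MvPolynomial.eval (fun i : Fin 2 => if i = 0 then x.1 else x.2) p

/-- A vector field whose two components are polynomials of degree at most `k`. -/
def IsVPolyDeg (k : ℕ) (v : V2 → V2) : Prop :=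
  IsPolyDeg k (fun x => (v x).1) ∧ IsPolyDeg k (fun x => (v x).2)

/-- partial derivative in the `x` direction -/
def pd1 (f : V2 → ℝ) (x : V2) : ℝ := fderiv ℝ f x (1, 0)

/-- partial derivative in the `y` direction -/
def pd2 (f : V2 → ℝ) (x : V2) : ℝ := fderiv ℝ f x (0, 1)

/-- `curl` of a scalar function: `(∂w/∂y, -∂w/∂x)`. -/
def curl2 (w : V2 → ℝ) : V2 → V2 := fun x => (pd2 w x, - pd1 w x)

/-- divergence of a planar vector field -/
def div2 (v : V2 → V2) (x : V2) : ℝ :=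
  pd1 (fun y => (v y).1) x + pd2 (fun y => (v y).2) x

/-- Parametrization of the segment from `p` to `q`. -/
def seg (p q : V2) (s : ℝ) : V2 := p + s • (q - p)

/-- A non-degenerate triangle, together with its barycentric coordinates `lam i`,
unit outward normals `nrm i` and unit tangents `tang i` of the edges `e i`
(the edge `e i` being opposite the vertex `a i`, joining `a (i+1)` and `a (i+2)`),
oriented so that `nrm i × tang i > 0`. -/
structure Triangle where
  a : Fin 3 → V2
  indep : AffineIndependent ℝ a
  lam : Fin 3 → V2 → ℝ
  lam_affine : ∀ i, ∃ (L : V2 →ₗ[ℝ] ℝ) (c : ℝ), ∀ x, lam i x = L x + c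
  lam_apply : ∀ i j, lam i (a j) = if i = j then (1 : ℝ) else 0
  nrm : Fin 3 → V2
  tang : Fin 3 → V2
  nrm_unit : ∀ i, enorm2 (nrm i) = 1
  tang_unit : ∀ i, enorm2 (tang i) = 1
  tang_parallel : ∀ i, ∃ c : ℝ, a (i + 2) - a (i + 1) = c • tang i
  nrm_orth : ∀ i, dot2 (nrm i) (tang i) = 0
  nrm_outward : ∀ i, dot2 (nrm i) (a i - a (i + 1)) < 0
  orient : ∀ i, 0 < cross2 (nrm i) (tang i)

/-- The (closed) triangle as a subset of the plane. -/
def triSet (T : Triangle) : Set V2 := convexHull ℝ (Set.range T.a)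

/-- Parametrization of the edge `e i` of `T` (from `a (i+1)` to `a (i+2)`). -/
def epara (T : Triangle) (i : Fin 3) (s : ℝ) : V2 := seg (T.a (i + 1)) (T.a (i + 2)) s

/-- Length of edge `e i`. -/
def elen (T : Triangle) (i : Fin 3) : ℝ := enorm2 (T.a (i + 2) - T.a (i + 1))

/-- Area of the triangle. -/
def areaT (T : Triangle) : ℝ := |cross2 (T.a 1 - T.a 0) (T.a 2 - T.a 0)| / 2

/-- The normal component of `v` on each edge of `T` is a polynomial of degree at
most one along that edge. -/
def NormalP1 (T : Triangle) (v : V2 → V2) : Prop :=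
  ∀ i : Fin 3, ∃ α β : ℝ, ∀ s ∈ Set.Icc (0 : ℝ) 1,
    dot2 (v (epara T i s)) (T.nrm i) = α + β * s

/-- Membership in `P^{2-}(T)`: vector-valued quadratic polynomials whose normal
components on the edges are of degree at most one. -/
def memP2m (T : Triangle) (v : V2 → V2) : Prop := IsVPolyDeg 2 v ∧ NormalP1 T v

/-- `w_{T,e_i} := curl(λ_j λ_k (3 λ_i − 1))`, `{i,j,k} = {1,2,3}`. -/
def wE (T : Triangle) (i : Fin 3) : V2 → V2 :=
  curl2 (fun x => T.lam (i + 1) x * T.lam (i + 2) x * (3 * T.lam i x - 1))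

/-- `w_{T,e_j,e_k} := curl(λ_i²)`, `{i,j,k} = {1,2,3}` (indexed by the remaining index `i`). -/
def wEE (T : Triangle) (i : Fin 3) : V2 → V2 :=
  curl2 (fun x => (T.lam i x) ^ 2)

namespace Triangle

variable (T : Triangle)

/-- gradient of `lam i` -/
def B (i : Fin 3) : V2 := (T.lam i (1,0) - T.lam i (0,0), T.lam i (0,1) - T.lam i (0,0))

/-- rotated gradient -/
def Jb (i : Fin 3) : V2 := ((T.B i).2, -(T.B i).1)

lemma lam_expand (i : Fin 3) (x : V2) :
    T.lam i x = T.lam i (0,0) + x.1 * (T.B i).1 + x.2 * (T.B i).2 := by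
  obtain ⟨L, c, hL⟩ := T.lam_affine i
  have hx : (x : V2) = x.1 • ((1:ℝ),(0:ℝ)) + x.2 • ((0:ℝ),(1:ℝ)) := by
    ext <;> simp
  simp only [B, hL]
  have h0 : L ((0,0) : V2) = 0 := by
    have : ((0,0) : V2) = 0 := rfl
    rw [this, L.map_zero]
  conv_lhs => rw [hx]
  simp only [L.map_add, L.map_smul, smul_eq_mul, h0]
  ring

lemma lam_seg (i : Fin 3) (p q : V2) (s : ℝ) :
    T.lam i (seg p q s) = (1 - s) * T.lam i p + s * T.lam i q := by
  have h1 := T.lam_expand i p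
  have h2 := T.lam_expand i q
  have h3 := T.lam_expand i (seg p q s)
  simp only [seg, Prod.fst_add, Prod.snd_add, Prod.smul_fst, Prod.smul_snd, Prod.fst_sub,
    Prod.snd_sub, smul_eq_mul] at h3
  simp only [seg]
  rw [h3, h1, h2]; ring

lemma dot2_B_sub (i : Fin 3) (p q : V2) :
    dot2 (T.B i) (p - q) = T.lam i p - T.lam i q := by
  have h1 := T.lam_expand i p
  have h2 := T.lam_expand i q
  simp only [dot2, Prod.fst_sub, Prod.snd_sub]
  rw [h1, h2]; ring

end Triangle

namespace Triangle

variable (T : Triangle)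

/-- edge vectors from `a 2` -/
def v1 : V2 := T.a 0 - T.a 2
def v2 : V2 := T.a 1 - T.a 2

lemma lam_aff_comb (j : Fin 3) (p q r : V2) (u t : ℝ) :
    T.lam j (p + u • q + t • r) = T.lam j p + u * dot2 (T.B j) q + t * dot2 (T.B j) r := by
  rw [T.lam_expand j (p + u • q + t • r), T.lam_expand j p]
  simp only [dot2, Prod.fst_add, Prod.snd_add, Prod.smul_fst, Prod.smul_snd, smul_eq_mul]
  ring

lemma dotB01 : dot2 (T.B 0) (T.v1) = 1 := by
  rw [v1, T.dot2_B_sub]; simp [T.lam_apply]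
lemma dotB02 : dot2 (T.B 0) (T.v2) = 0 := by
  rw [v2, T.dot2_B_sub]; simp [T.lam_apply]
lemma dotB11 : dot2 (T.B 1) (T.v1) = 0 := by
  rw [v1, T.dot2_B_sub]; simp [T.lam_apply]
lemma dotB12 : dot2 (T.B 1) (T.v2) = 1 := by
  rw [v2, T.dot2_B_sub]; simp [T.lam_apply]
lemma dotB21 : dot2 (T.B 2) (T.v1) = -1 := by
  rw [v1, T.dot2_B_sub]; simp [T.lam_apply]
lemma dotB22 : dot2 (T.B 2) (T.v2) = -1 := by
  rw [v2, T.dot2_B_sub]; simp [T.lam_apply]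

lemma cross_mul_one : cross2 (T.B 0) (T.B 1) * cross2 (T.v1) (T.v2) = 1 := by
  have h11 := T.dotB01
  have h12 := T.dotB02
  have h21 := T.dotB11
  have h22 := T.dotB12
  simp only [dot2] at h11 h12 h21 h22
  simp only [cross2]
  linear_combination ((T.B 1).1 * (T.v2).1 + (T.B 1).2 * (T.v2).2) * h11 + h22 -
    ((T.B 1).1 * (T.v1).1 + (T.B 1).2 * (T.v1).2) * h12

lemma delta_ne : cross2 (T.B 0) (T.B 1) ≠ 0 :=
  left_ne_zero_of_mul_eq_one T.cross_mul_one

lemma lam01_inj {x y : V2} (h0 : T.lam 0 x = T.lam 0 y) (h1 : T.lam 1 x = T.lam 1 y) :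
    x = y := by
  have e0 : dot2 (T.B 0) (x - y) = 0 := by rw [T.dot2_B_sub, h0, sub_self]
  have e1 : dot2 (T.B 1) (x - y) = 0 := by rw [T.dot2_B_sub, h1, sub_self]
  have hd := T.delta_ne
  simp only [dot2, cross2, Prod.fst_sub, Prod.snd_sub] at e0 e1 hd
  have w1 : (x.1 - y.1) * ((T.B 0).1 * (T.B 1).2 - (T.B 0).2 * (T.B 1).1) = 0 := by
    linear_combination (T.B 1).2 * e0 - (T.B 0).2 * e1
  have w2 : (x.2 - y.2) * ((T.B 0).1 * (T.B 1).2 - (T.B 0).2 * (T.B 1).1) = 0 := by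
    linear_combination (T.B 0).1 * e1 - (T.B 1).1 * e0
  have hx1 : x.1 = y.1 := by
    rcases mul_eq_zero.mp w1 with h | h
    · linarith
    · exact absurd h hd
  have hx2 : x.2 = y.2 := by
    rcases mul_eq_zero.mp w2 with h | h
    · linarith
    · exact absurd h hd
  exact Prod.ext hx1 hx2

lemma lam_psi (j : Fin 3) (u t : ℝ) :
    T.lam j (T.a 2 + u • T.v1 + t • T.v2)
      = T.lam j (T.a 2) + u * dot2 (T.B j) (T.v1) + t * dot2 (T.B j) (T.v2) :=
  T.lam_aff_comb j _ _ _ u t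

lemma lam0_psi (u t : ℝ) : T.lam 0 (T.a 2 + u • T.v1 + t • T.v2) = u := by
  rw [T.lam_psi, T.dotB01, T.dotB02]; simp [T.lam_apply]
lemma lam1_psi (u t : ℝ) : T.lam 1 (T.a 2 + u • T.v1 + t • T.v2) = t := by
  rw [T.lam_psi, T.dotB11, T.dotB12]; simp [T.lam_apply]
lemma lam2_psi (u t : ℝ) : T.lam 2 (T.a 2 + u • T.v1 + t • T.v2) = 1 - u - t := by
  rw [T.lam_psi, T.dotB21, T.dotB22]; simp [T.lam_apply]; ring

lemma point_repr (x : V2) :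
    x = T.a 2 + (T.lam 0 x) • T.v1 + (T.lam 1 x) • T.v2 := by
  apply T.lam01_inj
  · rw [T.lam0_psi]
  · rw [T.lam1_psi]

lemma lam2_eq (x : V2) : T.lam 2 x = 1 - T.lam 0 x - T.lam 1 x := by
  conv_lhs => rw [T.point_repr x]
  rw [T.lam2_psi]

lemma sumB1 : (T.B 0).1 + (T.B 1).1 + (T.B 2).1 = 0 := by
  have h0 := T.lam2_eq (0,0)
  have h1 := T.lam2_eq (1,0)
  have e0 := fun j => T.lam_expand j ((0,0) : V2)
  have e1 := fun j => T.lam_expand j ((1,0) : V2)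
  have e00 := e0 0; have e01 := e0 1; have e02 := e0 2
  have e10 := e1 0; have e11 := e1 1; have e12 := e1 2
  simp only at e00 e01 e02 e10 e11 e12
  rw [e10, e11, e12] at h1
  linarith

lemma sumB2 : (T.B 0).2 + (T.B 1).2 + (T.B 2).2 = 0 := by
  have h0 := T.lam2_eq (0,0)
  have h1 := T.lam2_eq (0,1)
  have e1 := fun j => T.lam_expand j ((0,1) : V2)
  have e10 := e1 0; have e11 := e1 1; have e12 := e1 2
  rw [e10, e11, e12] at h1
  simp only at h0 h1 ⊢
  linarith

end Triangle

namespace Triangle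

variable (T : Triangle)

lemma dot2_smul_right (u w : V2) (c : ℝ) : dot2 u (c • w) = c * dot2 u w := by
  simp only [dot2, Prod.smul_fst, Prod.smul_snd, smul_eq_mul]; ring

lemma dot2_smul_left (u w : V2) (c : ℝ) : dot2 (c • u) w = c * dot2 u w := by
  simp only [dot2, Prod.smul_fst, Prod.smul_snd, smul_eq_mul]; ring

lemma fin3_ne1 : ∀ j : Fin 3, j ≠ j + 1 := by decide
lemma fin3_ne2 : ∀ j : Fin 3, j ≠ j + 2 := by decide
lemma fin3_ne12 : ∀ j : Fin 3, j + 1 ≠ j + 2 := by decide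

lemma nrm_eq_smul (i : Fin 3) : ∃ μ : ℝ, μ ≠ 0 ∧ T.nrm i = μ • T.B i := by
  obtain ⟨cc, hc⟩ := T.tang_parallel i
  have hd1 : dot2 (T.B i) (T.a (i+2) - T.a (i+1)) = 0 := by
    rw [T.dot2_B_sub, T.lam_apply, T.lam_apply]
    simp [(fin3_ne2 i).symm, (fin3_ne1 i).symm]
  have hd2 : dot2 (T.B (i+1)) (T.a (i+2) - T.a (i+1)) = -1 := by
    rw [T.dot2_B_sub, T.lam_apply, T.lam_apply]
    simp [(fin3_ne12 i).symm]
  have hd3 : dot2 (T.B i) (T.a i - T.a (i+1)) = 1 := by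
    rw [T.dot2_B_sub, T.lam_apply, T.lam_apply]
    simp [fin3_ne1 i]
  rw [hc, dot2_smul_right] at hd1 hd2
  have hcc : cc ≠ 0 := by
    intro h; rw [h] at hd2; simp at hd2
  have hbt : dot2 (T.B i) (T.tang i) = 0 := by
    rcases mul_eq_zero.mp hd1 with h | h
    · exact absurd h hcc
    · exact h
  have hq : (T.tang i).1^2 + (T.tang i).2^2 ≠ 0 := by
    intro h
    have h1 : (T.tang i).1 = 0 := by nlinarith [sq_nonneg (T.tang i).1, sq_nonneg (T.tang i).2]
    have h2 : (T.tang i).2 = 0 := by nlinarith [sq_nonneg (T.tang i).1, sq_nonneg (T.tang i).2]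
    have : dot2 (T.B (i+1)) (T.tang i) = 0 := by simp [dot2, h1, h2]
    rw [this] at hd2; simp at hd2
  have hnt := T.nrm_orth i
  simp only [dot2] at hbt hnt
  -- n and b are parallel
  have hpar : (T.nrm i).1 * (T.B i).2 - (T.nrm i).2 * (T.B i).1 = 0 := by
    have key : ((T.nrm i).1 * (T.B i).2 - (T.nrm i).2 * (T.B i).1) *
        ((T.tang i).1^2 + (T.tang i).2^2) = 0 := by
      linear_combination ((T.B i).2 * (T.tang i).1 - (T.B i).1 * (T.tang i).2) * hnt +
        ((T.nrm i).1 * (T.tang i).2 - (T.nrm i).2 * (T.tang i).1) * hbt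
    rcases mul_eq_zero.mp key with h | h
    · exact h
    · exact absurd h hq
  have hbq : (T.B i).1^2 + (T.B i).2^2 ≠ 0 := by
    intro h
    have h1 : (T.B i).1 = 0 := by nlinarith [sq_nonneg (T.B i).1, sq_nonneg (T.B i).2]
    have h2 : (T.B i).2 = 0 := by nlinarith [sq_nonneg (T.B i).1, sq_nonneg (T.B i).2]
    simp only [dot2, h1, h2] at hd3
    norm_num at hd3
  set mu : ℝ := ((T.nrm i).1 * (T.B i).1 + (T.nrm i).2 * (T.B i).2) /
      ((T.B i).1^2 + (T.B i).2^2) with hmu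
  have hvec : T.nrm i = mu • T.B i := by
    apply Prod.ext
    · simp only [hmu, Prod.smul_fst, Prod.smul_snd, smul_eq_mul]
      field_simp
      linear_combination (T.B i).2 * hpar
    · simp only [hmu, Prod.smul_fst, Prod.smul_snd, smul_eq_mul]
      field_simp
      linear_combination (-(T.B i).1) * hpar
  have hmune : mu ≠ 0 := by
    have hout := T.nrm_outward i
    rw [hvec, dot2_smul_left, hd3, mul_one] at hout
    exact ne_of_lt hout
  exact ⟨mu, hmune, hvec⟩

end Triangle

namespace Triangle

/-- the continuous linear map `z ↦ dot2 b z` -/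
def clmOf (b : V2) : V2 →L[ℝ] ℝ :=
  b.1 • ContinuousLinearMap.fst ℝ ℝ ℝ + b.2 • ContinuousLinearMap.snd ℝ ℝ ℝ

@[simp] lemma clmOf_apply (b z : V2) : clmOf b z = b.1 * z.1 + b.2 * z.2 := by
  simp [clmOf, smul_eq_mul]

variable (T : Triangle)

lemma hasFDerivAt_lam (i : Fin 3) (x : V2) : HasFDerivAt (T.lam i) (clmOf (T.B i)) x := by
  have hfun : T.lam i = fun y : V2 =>
      T.lam i (0,0) + (y.1 * (T.B i).1 + y.2 * (T.B i).2) := by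
    funext y; rw [T.lam_expand i y]; ring
  rw [hfun]
  have H : HasFDerivAt (fun y : V2 => T.lam i (0,0) + (y.1 * (T.B i).1 + y.2 * (T.B i).2))
      (((T.B i).1 • ContinuousLinearMap.fst ℝ ℝ ℝ) + ((T.B i).2 • ContinuousLinearMap.snd ℝ ℝ ℝ)) x :=
    ((hasFDerivAt_fst.mul_const (T.B i).1).add (hasFDerivAt_snd.mul_const (T.B i).2)).const_add _
  exact H

/-- directional derivative of a generic quadratic in `(lam 0, lam 1)` -/
lemma fderiv_quad (pa pb pc pd pe pf : ℝ) (x z : V2) :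
    fderiv ℝ (fun y : V2 => pa + pb * T.lam 0 y + pc * T.lam 1 y + pd * (T.lam 0 y * T.lam 0 y)
        + pe * (T.lam 0 y * T.lam 1 y) + pf * (T.lam 1 y * T.lam 1 y)) x z
      = (pb + 2 * pd * T.lam 0 x + pe * T.lam 1 x) * dot2 (T.B 0) z
        + (pc + pe * T.lam 0 x + 2 * pf * T.lam 1 x) * dot2 (T.B 1) z := by
  have h0 := T.hasFDerivAt_lam 0 x
  have h1 := T.hasFDerivAt_lam 1 x
  have H : HasFDerivAt (fun y : V2 => pa + pb * T.lam 0 y + pc * T.lam 1 y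
      + pd * (T.lam 0 y * T.lam 0 y) + pe * (T.lam 0 y * T.lam 1 y)
      + pf * (T.lam 1 y * T.lam 1 y)) _ x :=
    (((((h0.const_mul pb).const_add pa).add (h1.const_mul pc)).add
      ((h0.mul h0).const_mul pd)).add ((h0.mul h1).const_mul pe)).add
      ((h1.mul h1).const_mul pf)
  rw [H.fderiv]
  simp only [ContinuousLinearMap.add_apply, ContinuousLinearMap.coe_smul', Pi.smul_apply,
    clmOf_apply, smul_eq_mul, dot2]
  ring

end Triangle

namespace Triangle

variable (T : Triangle)

lemma wEE_apply (i : Fin 3) (x : V2) : wEE T i x = (2 * T.lam i x) • T.Jb i := by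
  have h0 := T.hasFDerivAt_lam i x
  have hfun : (fun y : V2 => (T.lam i y) ^ 2) = fun y : V2 => T.lam i y * T.lam i y :=
    funext fun y => sq (T.lam i y)
  have H : HasFDerivAt (fun y : V2 => T.lam i y * T.lam i y) _ x := h0.mul h0
  simp only [wEE, curl2, pd1, pd2, hfun]
  rw [H.fderiv]
  apply Prod.ext <;>
    simp [Jb, smul_eq_mul, dot2] <;> ring

lemma wE_apply (i : Fin 3) (x : V2) :
    wE T i x = (T.lam (i+2) x * (3 * T.lam i x - 1)) • T.Jb (i+1)
      + (T.lam (i+1) x * (3 * T.lam i x - 1)) • T.Jb (i+2)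
      + (3 * (T.lam (i+1) x * T.lam (i+2) x)) • T.Jb i := by
  have h0 := T.hasFDerivAt_lam i x
  have h1 := T.hasFDerivAt_lam (i+1) x
  have h2 := T.hasFDerivAt_lam (i+2) x
  have H : HasFDerivAt (fun y : V2 => T.lam (i+1) y * T.lam (i+2) y * (3 * T.lam i y - 1)) _ x :=
    (h1.mul h2).mul ((h0.const_mul 3).sub_const 1)
  simp only [wE, curl2, pd1, pd2]
  rw [H.fderiv]
  apply Prod.ext <;>
    simp [Jb, smul_eq_mul, dot2] <;> ring

lemma wE_comp_eq (i : Fin 3) :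
    (fun y => (wE T i y).1) = (fun y =>
        (T.lam (i+2) y * (3 * T.lam i y - 1)) * (T.Jb (i+1)).1
      + (T.lam (i+1) y * (3 * T.lam i y - 1)) * (T.Jb (i+2)).1
      + (3 * (T.lam (i+1) y * T.lam (i+2) y)) * (T.Jb i).1) := by
  funext y; rw [T.wE_apply]
  simp [smul_eq_mul]

lemma wE_comp_eq2 (i : Fin 3) :
    (fun y => (wE T i y).2) = (fun y =>
        (T.lam (i+2) y * (3 * T.lam i y - 1)) * (T.Jb (i+1)).2
      + (T.lam (i+1) y * (3 * T.lam i y - 1)) * (T.Jb (i+2)).2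
      + (3 * (T.lam (i+1) y * T.lam (i+2) y)) * (T.Jb i).2) := by
  funext y; rw [T.wE_apply]
  simp [smul_eq_mul]

lemma wEE_comp_eq (i : Fin 3) :
    (fun y => (wEE T i y).1) = (fun y => (2 * T.lam i y) * (T.Jb i).1) := by
  funext y; rw [T.wEE_apply]; simp [smul_eq_mul]

lemma wEE_comp_eq2 (i : Fin 3) :
    (fun y => (wEE T i y).2) = (fun y => (2 * T.lam i y) * (T.Jb i).2) := by
  funext y; rw [T.wEE_apply]; simp [smul_eq_mul]

lemma wE_diff1 (i : Fin 3) (x : V2) : DifferentiableAt ℝ (fun y => (wE T i y).1) x := by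
  rw [T.wE_comp_eq]
  have h0 := T.hasFDerivAt_lam i x
  have h1 := T.hasFDerivAt_lam (i+1) x
  have h2 := T.hasFDerivAt_lam (i+2) x
  exact ((((h2.mul ((h0.const_mul 3).sub_const 1)).mul_const _).add
    ((h1.mul ((h0.const_mul 3).sub_const 1)).mul_const _)).add
    (((h1.mul h2).const_mul 3).mul_const _)).differentiableAt

lemma wE_diff2 (i : Fin 3) (x : V2) : DifferentiableAt ℝ (fun y => (wE T i y).2) x := by
  rw [T.wE_comp_eq2]
  have h0 := T.hasFDerivAt_lam i x
  have h1 := T.hasFDerivAt_lam (i+1) x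
  have h2 := T.hasFDerivAt_lam (i+2) x
  exact ((((h2.mul ((h0.const_mul 3).sub_const 1)).mul_const _).add
    ((h1.mul ((h0.const_mul 3).sub_const 1)).mul_const _)).add
    (((h1.mul h2).const_mul 3).mul_const _)).differentiableAt

lemma wEE_diff1 (i : Fin 3) (x : V2) : DifferentiableAt ℝ (fun y => (wEE T i y).1) x := by
  rw [T.wEE_comp_eq]
  exact (((T.hasFDerivAt_lam i x).const_mul 2).mul_const _).differentiableAt

lemma wEE_diff2 (i : Fin 3) (x : V2) : DifferentiableAt ℝ (fun y => (wEE T i y).2) x := by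
  rw [T.wEE_comp_eq2]
  exact (((T.hasFDerivAt_lam i x).const_mul 2).mul_const _).differentiableAt

lemma div2_wE (i : Fin 3) (x : V2) : div2 (wE T i) x = 0 := by
  have h0 := T.hasFDerivAt_lam i x
  have h1 := T.hasFDerivAt_lam (i+1) x
  have h2 := T.hasFDerivAt_lam (i+2) x
  have H1 : HasFDerivAt (fun y => (T.lam (i+2) y * (3 * T.lam i y - 1)) * (T.Jb (i+1)).1
      + (T.lam (i+1) y * (3 * T.lam i y - 1)) * (T.Jb (i+2)).1
      + (3 * (T.lam (i+1) y * T.lam (i+2) y)) * (T.Jb i).1) _ x :=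
    (((h2.mul ((h0.const_mul 3).sub_const 1)).mul_const _).add
      ((h1.mul ((h0.const_mul 3).sub_const 1)).mul_const _)).add
      (((h1.mul h2).const_mul 3).mul_const _)
  have H2 : HasFDerivAt (fun y => (T.lam (i+2) y * (3 * T.lam i y - 1)) * (T.Jb (i+1)).2
      + (T.lam (i+1) y * (3 * T.lam i y - 1)) * (T.Jb (i+2)).2
      + (3 * (T.lam (i+1) y * T.lam (i+2) y)) * (T.Jb i).2) _ x :=
    (((h2.mul ((h0.const_mul 3).sub_const 1)).mul_const _).add
      ((h1.mul ((h0.const_mul 3).sub_const 1)).mul_const _)).add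
      (((h1.mul h2).const_mul 3).mul_const _)
  rw [div2, pd1, pd2, T.wE_comp_eq, T.wE_comp_eq2, H1.fderiv, H2.fderiv]
  simp only [ContinuousLinearMap.add_apply, ContinuousLinearMap.coe_smul', Pi.smul_apply,
    clmOf_apply, smul_eq_mul, Jb]
  ring

lemma div2_wEE (i : Fin 3) (x : V2) : div2 (wEE T i) x = 0 := by
  have h0 := T.hasFDerivAt_lam i x
  have H1 : HasFDerivAt (fun y => (2 * T.lam i y) * (T.Jb i).1) _ x :=
    (h0.const_mul 2).mul_const _
  have H2 : HasFDerivAt (fun y => (2 * T.lam i y) * (T.Jb i).2) _ x :=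
    (h0.const_mul 2).mul_const _
  rw [div2, pd1, pd2, T.wEE_comp_eq, T.wEE_comp_eq2, H1.fderiv, H2.fderiv]
  simp only [ContinuousLinearMap.add_apply, ContinuousLinearMap.coe_smul', Pi.smul_apply,
    clmOf_apply, smul_eq_mul, Jb]
  ring

end Triangle

open MvPolynomial

lemma isPolyDeg_const (k : ℕ) (c : ℝ) : IsPolyDeg k (fun _ => c) :=
  ⟨C c, by simp [totalDegree_C], fun x => by simp⟩

lemma IsPolyDeg.congr {k : ℕ} {f g : V2 → ℝ} (h : IsPolyDeg k f) (hfg : ∀ x, f x = g x) :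
    IsPolyDeg k g := by
  obtain ⟨p, hp, he⟩ := h
  exact ⟨p, hp, fun x => (hfg x) ▸ he x⟩

lemma IsPolyDeg.add {k : ℕ} {f g : V2 → ℝ} (hf : IsPolyDeg k f) (hg : IsPolyDeg k g) :
    IsPolyDeg k (fun x => f x + g x) := by
  obtain ⟨p, hp, hpe⟩ := hf
  obtain ⟨q, hq, hqe⟩ := hg
  exact ⟨p + q, le_trans (totalDegree_add p q) (max_le hp hq),
    fun x => by simp [hpe x, hqe x]⟩

lemma IsPolyDeg.mul {j k : ℕ} {f g : V2 → ℝ} (hf : IsPolyDeg j f) (hg : IsPolyDeg k g) :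
    IsPolyDeg (j + k) (fun x => f x * g x) := by
  obtain ⟨p, hp, hpe⟩ := hf
  obtain ⟨q, hq, hqe⟩ := hg
  exact ⟨p * q, le_trans (totalDegree_mul p q) (add_le_add hp hq),
    fun x => by simp [hpe x, hqe x]⟩

lemma IsPolyDeg.const_mul {k : ℕ} {f : V2 → ℝ} (c : ℝ) (hf : IsPolyDeg k f) :
    IsPolyDeg k (fun x => c * f x) := by
  have := (isPolyDeg_const 0 c).mul hf
  simpa using this

namespace Triangle

lemma isPolyDeg_lam (T : Triangle) (i : Fin 3) : IsPolyDeg 1 (T.lam i) := by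
  refine ⟨C (T.lam i (0,0)) + C (T.B i).1 * X 0 + C (T.B i).2 * X 1, ?_, ?_⟩
  · refine le_trans (totalDegree_add _ _) (max_le (le_trans (totalDegree_add _ _)
      (max_le ?_ ?_)) ?_)
    · simp [totalDegree_C]
    · exact le_trans (totalDegree_mul _ _) (by simp [totalDegree_C, totalDegree_X])
    · exact le_trans (totalDegree_mul _ _) (by simp [totalDegree_C, totalDegree_X])
  · intro x
    rw [T.lam_expand i x]
    simp
    ring

/-- extraction of the six coefficients of a polynomial of degree at most 2 -/
lemma isPolyDeg2_coeffs {f : V2 → ℝ} (h : IsPolyDeg 2 f) :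
    ∃ A B C D E F : ℝ, ∀ x : V2,
      f x = A + B * x.1 + C * x.2 + D * (x.1 * x.1) + E * (x.1 * x.2) + F * (x.2 * x.2) := by
  obtain ⟨p, hdeg, hev⟩ := h
  refine ⟨∑ m ∈ p.support, if (m 0, m 1) = (0,0) then p.coeff m else 0,
    ∑ m ∈ p.support, if (m 0, m 1) = (1,0) then p.coeff m else 0,
    ∑ m ∈ p.support, if (m 0, m 1) = (0,1) then p.coeff m else 0,
    ∑ m ∈ p.support, if (m 0, m 1) = (2,0) then p.coeff m else 0,
    ∑ m ∈ p.support, if (m 0, m 1) = (1,1) then p.coeff m else 0,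
    ∑ m ∈ p.support, if (m 0, m 1) = (0,2) then p.coeff m else 0, fun x => ?_⟩
  rw [hev x, eval_eq']
  simp only [Finset.sum_mul]
  rw [← Finset.sum_add_distrib, ← Finset.sum_add_distrib, ← Finset.sum_add_distrib,
    ← Finset.sum_add_distrib, ← Finset.sum_add_distrib]
  apply Finset.sum_congr rfl
  intro m hm
  have hsum : m 0 + m 1 ≤ 2 := by
    have h1 := le_totalDegree hm
    have h2 : (m.sum fun _ e => e) = m 0 + m 1 := by
      rw [Finsupp.sum_fintype]
      · exact Fin.sum_univ_two _
      · intro _; rfl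
    omega
  have hprod : (∏ i : Fin 2, (if i = 0 then x.1 else x.2) ^ m i) = x.1 ^ m 0 * x.2 ^ m 1 := by
    rw [Fin.prod_univ_two]
    norm_num
  rw [hprod]
  rcases (by omega : m 0 = 0 ∨ m 0 = 1 ∨ m 0 = 2) with h|h|h <;>
    rcases (by omega : m 1 = 0 ∨ m 1 = 1 ∨ m 1 = 2) with g|g|g <;>
    simp only [h, g, Prod.mk.injEq] at hsum ⊢ <;>
    first
      | omega
      | (norm_num; try ring; try tauto)
end Triangle

namespace Triangle

variable (T : Triangle)

lemma dotJbB (j : Fin 3) : dot2 (T.Jb j) (T.B j) = 0 := by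
  simp [Jb, dot2]; ring

lemma dotJb_nrm (j : Fin 3) : dot2 (T.Jb j) (T.nrm j) = 0 := by
  obtain ⟨μ, -, hvec⟩ := T.nrm_eq_smul j
  rw [hvec, dot2_smul_right, T.dotJbB, mul_zero]

lemma lam_epara (k j : Fin 3) (s : ℝ) :
    T.lam k (epara T j s) = (1 - s) * T.lam k (T.a (j+1)) + s * T.lam k (T.a (j+2)) := by
  rw [epara, T.lam_seg]

lemma lamD_zero (j : Fin 3) : T.lam j (T.a (j+2)) - T.lam j (T.a (j+1)) = 0 := by
  rw [T.lam_apply, T.lam_apply]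
  simp [(fin3_ne2 j).symm, (fin3_ne1 j).symm]

lemma fin3_cases : ∀ i j : Fin 3, j = i ∨ j = i + 1 ∨ j = i + 2 := by decide

lemma dot2_add_left (u v w : V2) : dot2 (u + v) w = dot2 u w + dot2 v w := by
  simp [dot2, Prod.fst_add, Prod.snd_add]; ring

lemma aff3 (j : Fin 3) : IsPolyDeg 1 (fun x => 3 * T.lam j x - 1) :=
  (((T.isPolyDeg_lam j).const_mul 3).add (isPolyDeg_const 1 (-1))).congr (fun x => by ring)

lemma isVPolyDeg_wE (i : Fin 3) : IsVPolyDeg 2 (wE T i) := by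
  constructor
  · rw [T.wE_comp_eq i]
    exact ((((T.isPolyDeg_lam (i+2)).mul (T.aff3 i)).mul (isPolyDeg_const 0 _)).add
      ((((T.isPolyDeg_lam (i+1)).mul (T.aff3 i)).mul (isPolyDeg_const 0 _)))).add
      (((((T.isPolyDeg_lam (i+1)).mul (T.isPolyDeg_lam (i+2))).const_mul 3).mul
        (isPolyDeg_const 0 _)))
  · rw [T.wE_comp_eq2 i]
    exact ((((T.isPolyDeg_lam (i+2)).mul (T.aff3 i)).mul (isPolyDeg_const 0 _)).add
      ((((T.isPolyDeg_lam (i+1)).mul (T.aff3 i)).mul (isPolyDeg_const 0 _)))).add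
      (((((T.isPolyDeg_lam (i+1)).mul (T.isPolyDeg_lam (i+2))).const_mul 3).mul
        (isPolyDeg_const 0 _)))

lemma isVPolyDeg_wEE (i : Fin 3) : IsVPolyDeg 2 (wEE T i) := by
  constructor
  · rw [T.wEE_comp_eq i]
    exact (((T.isPolyDeg_lam i).const_mul 2).mul (isPolyDeg_const 1 _)).congr (fun x => rfl)
  · rw [T.wEE_comp_eq2 i]
    exact (((T.isPolyDeg_lam i).const_mul 2).mul (isPolyDeg_const 1 _)).congr (fun x => rfl)

lemma normalP1_wEE (i : Fin 3) : NormalP1 T (wEE T i) := by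
  intro j
  refine ⟨2 * T.lam i (T.a (j+1)) * dot2 (T.Jb i) (T.nrm j),
    2 * (T.lam i (T.a (j+2)) - T.lam i (T.a (j+1))) * dot2 (T.Jb i) (T.nrm j),
    fun s _ => ?_⟩
  rw [T.wEE_apply, dot2_smul_left, T.lam_epara]
  ring

lemma normalP1_wE (i : Fin 3) : NormalP1 T (wE T i) := by
  intro j
  have h1 : (T.lam i (T.a (j+2)) - T.lam i (T.a (j+1)))
      * (T.lam (i+2) (T.a (j+2)) - T.lam (i+2) (T.a (j+1)))
      * dot2 (T.Jb (i+1)) (T.nrm j) = 0 := by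
    rcases fin3_cases i j with h | h | h
    · rw [h, T.lamD_zero]; ring
    · rw [h, T.dotJb_nrm]; ring
    · rw [show j = i + 2 from h, ← show j = i + 2 from h, T.lamD_zero]; ring
  have h2 : (T.lam i (T.a (j+2)) - T.lam i (T.a (j+1)))
      * (T.lam (i+1) (T.a (j+2)) - T.lam (i+1) (T.a (j+1)))
      * dot2 (T.Jb (i+2)) (T.nrm j) = 0 := by
    rcases fin3_cases i j with h | h | h
    · rw [h, T.lamD_zero]; ring
    · rw [show j = i + 1 from h, ← show j = i + 1 from h, T.lamD_zero]; ring
    · rw [h, T.dotJb_nrm]; ring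
  have h3 : (T.lam (i+1) (T.a (j+2)) - T.lam (i+1) (T.a (j+1)))
      * (T.lam (i+2) (T.a (j+2)) - T.lam (i+2) (T.a (j+1)))
      * dot2 (T.Jb i) (T.nrm j) = 0 := by
    rcases fin3_cases i j with h | h | h
    · rw [h, T.dotJb_nrm]; ring
    · rw [show j = i + 1 from h, ← show j = i + 1 from h, T.lamD_zero]; ring
    · rw [show j = i + 2 from h, ← show j = i + 2 from h, T.lamD_zero]; ring
  refine ⟨T.lam (i+2) (T.a (j+1)) * (3 * T.lam i (T.a (j+1)) - 1) * dot2 (T.Jb (i+1)) (T.nrm j)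
      + T.lam (i+1) (T.a (j+1)) * (3 * T.lam i (T.a (j+1)) - 1) * dot2 (T.Jb (i+2)) (T.nrm j)
      + 3 * T.lam (i+1) (T.a (j+1)) * T.lam (i+2) (T.a (j+1)) * dot2 (T.Jb i) (T.nrm j),
    ((T.lam (i+2) (T.a (j+2)) - T.lam (i+2) (T.a (j+1))) * (3 * T.lam i (T.a (j+1)) - 1)
        + T.lam (i+2) (T.a (j+1)) * 3 * (T.lam i (T.a (j+2)) - T.lam i (T.a (j+1))))
        * dot2 (T.Jb (i+1)) (T.nrm j)
      + ((T.lam (i+1) (T.a (j+2)) - T.lam (i+1) (T.a (j+1))) * (3 * T.lam i (T.a (j+1)) - 1)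
        + T.lam (i+1) (T.a (j+1)) * 3 * (T.lam i (T.a (j+2)) - T.lam i (T.a (j+1))))
        * dot2 (T.Jb (i+2)) (T.nrm j)
      + 3 * (T.lam (i+1) (T.a (j+1)) * (T.lam (i+2) (T.a (j+2)) - T.lam (i+2) (T.a (j+1)))
        + (T.lam (i+1) (T.a (j+2)) - T.lam (i+1) (T.a (j+1))) * T.lam (i+2) (T.a (j+1)))
        * dot2 (T.Jb i) (T.nrm j), fun s _ => ?_⟩
  rw [T.wE_apply, dot2_add_left, dot2_add_left, dot2_smul_left, dot2_smul_left,
    dot2_smul_left, T.lam_epara, T.lam_epara, T.lam_epara]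
  linear_combination (3*s^2) * h1 + (3*s^2) * h2 + (3*s^2) * h3

end Triangle

namespace Triangle

variable (T : Triangle)

lemma fderiv_comb {f g : V2 → ℝ} {x : V2} (c : ℝ) (hf : DifferentiableAt ℝ f x)
    (hg : DifferentiableAt ℝ g x) (z : V2) :
    fderiv ℝ (fun y => c * f y + g y) x z = c * fderiv ℝ f x z + fderiv ℝ g x z := by
  rw [fderiv_fun_add (hf.const_mul c) hg]
  rw [fderiv_const_mul hf c]
  simp

lemma fderiv_cmul {f : V2 → ℝ} {x : V2} (c : ℝ) (hf : DifferentiableAt ℝ f x) (z : V2) :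
    fderiv ℝ (fun y => c * f y) x z = c * fderiv ℝ f x z := by
  rw [fderiv_const_mul hf c]; simp

lemma backward (v : V2 → V2) (c d : Fin 3 → ℝ)
    (hv : ∀ x, v x = (∑ i : Fin 3, c i • wE T i x) + ∑ i : Fin 3, d i • wEE T i x) :
    (memP2m T v ∧ ∀ x ∈ triSet T, div2 v x = 0) := by
  have hv1 : (fun y => (v y).1) = fun y =>
      c 0 * (wE T 0 y).1 + (c 1 * (wE T 1 y).1 + (c 2 * (wE T 2 y).1 +
      (d 0 * (wEE T 0 y).1 + (d 1 * (wEE T 1 y).1 + d 2 * (wEE T 2 y).1)))) := by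
    funext y
    rw [hv y]
    simp only [Fin.sum_univ_three, Prod.fst_add, Prod.smul_fst, smul_eq_mul]
    ring
  have hv2 : (fun y => (v y).2) = fun y =>
      c 0 * (wE T 0 y).2 + (c 1 * (wE T 1 y).2 + (c 2 * (wE T 2 y).2 +
      (d 0 * (wEE T 0 y).2 + (d 1 * (wEE T 1 y).2 + d 2 * (wEE T 2 y).2)))) := by
    funext y
    rw [hv y]
    simp only [Fin.sum_univ_three, Prod.snd_add, Prod.smul_snd, smul_eq_mul]
    ring
  refine ⟨⟨⟨?_, ?_⟩, ?_⟩, ?_⟩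
  · -- IsVPolyDeg 2, first component
    rw [hv1]
    exact ((T.isVPolyDeg_wE 0).1.const_mul _).add (((T.isVPolyDeg_wE 1).1.const_mul _).add
      (((T.isVPolyDeg_wE 2).1.const_mul _).add (((T.isVPolyDeg_wEE 0).1.const_mul _).add
      (((T.isVPolyDeg_wEE 1).1.const_mul _).add ((T.isVPolyDeg_wEE 2).1.const_mul _)))))
  · rw [hv2]
    exact ((T.isVPolyDeg_wE 0).2.const_mul _).add (((T.isVPolyDeg_wE 1).2.const_mul _).add
      (((T.isVPolyDeg_wE 2).2.const_mul _).add (((T.isVPolyDeg_wEE 0).2.const_mul _).add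
      (((T.isVPolyDeg_wEE 1).2.const_mul _).add ((T.isVPolyDeg_wEE 2).2.const_mul _)))))
  · -- NormalP1
    intro j
    obtain ⟨aE0, bE0, hE0⟩ := T.normalP1_wE 0 j
    obtain ⟨aE1, bE1, hE1⟩ := T.normalP1_wE 1 j
    obtain ⟨aE2, bE2, hE2⟩ := T.normalP1_wE 2 j
    obtain ⟨aF0, bF0, hF0⟩ := T.normalP1_wEE 0 j
    obtain ⟨aF1, bF1, hF1⟩ := T.normalP1_wEE 1 j
    obtain ⟨aF2, bF2, hF2⟩ := T.normalP1_wEE 2 j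
    refine ⟨c 0 * aE0 + c 1 * aE1 + c 2 * aE2 + d 0 * aF0 + d 1 * aF1 + d 2 * aF2,
      c 0 * bE0 + c 1 * bE1 + c 2 * bE2 + d 0 * bF0 + d 1 * bF1 + d 2 * bF2,
      fun s hs => ?_⟩
    have hdot : dot2 (v (epara T j s)) (T.nrm j) =
        c 0 * dot2 (wE T 0 (epara T j s)) (T.nrm j)
      + c 1 * dot2 (wE T 1 (epara T j s)) (T.nrm j)
      + c 2 * dot2 (wE T 2 (epara T j s)) (T.nrm j)
      + d 0 * dot2 (wEE T 0 (epara T j s)) (T.nrm j)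
      + d 1 * dot2 (wEE T 1 (epara T j s)) (T.nrm j)
      + d 2 * dot2 (wEE T 2 (epara T j s)) (T.nrm j) := by
      rw [hv]
      simp only [Fin.sum_univ_three, dot2, Prod.fst_add, Prod.snd_add, Prod.smul_fst,
        Prod.smul_snd, smul_eq_mul]
      ring
    rw [hdot, hE0 s hs, hE1 s hs, hE2 s hs, hF0 s hs, hF1 s hs, hF2 s hs]
    ring
  · -- divergence
    intro x _
    have D0 := T.wE_diff1 0 x; have D1 := T.wE_diff1 1 x; have D2 := T.wE_diff1 2 x
    have E0 := T.wEE_diff1 0 x; have E1 := T.wEE_diff1 1 x; have E2 := T.wEE_diff1 2 x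
    have D0' := T.wE_diff2 0 x; have D1' := T.wE_diff2 1 x; have D2' := T.wE_diff2 2 x
    have E0' := T.wEE_diff2 0 x; have E1' := T.wEE_diff2 1 x; have E2' := T.wEE_diff2 2 x
    have t5 : DifferentiableAt ℝ (fun y => d 1 * (wEE T 1 y).1 + d 2 * (wEE T 2 y).1) x :=
      (E1.const_mul _).add (E2.const_mul _)
    have t4 : DifferentiableAt ℝ (fun y => d 0 * (wEE T 0 y).1 +
        (d 1 * (wEE T 1 y).1 + d 2 * (wEE T 2 y).1)) x := (E0.const_mul _).add t5
    have t3 : DifferentiableAt ℝ (fun y => c 2 * (wE T 2 y).1 + (d 0 * (wEE T 0 y).1 +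
        (d 1 * (wEE T 1 y).1 + d 2 * (wEE T 2 y).1))) x := (D2.const_mul _).add t4
    have t2 : DifferentiableAt ℝ (fun y => c 1 * (wE T 1 y).1 + (c 2 * (wE T 2 y).1 +
        (d 0 * (wEE T 0 y).1 + (d 1 * (wEE T 1 y).1 + d 2 * (wEE T 2 y).1)))) x :=
      (D1.const_mul _).add t3
    have s5 : DifferentiableAt ℝ (fun y => d 1 * (wEE T 1 y).2 + d 2 * (wEE T 2 y).2) x :=
      (E1'.const_mul _).add (E2'.const_mul _)
    have s4 : DifferentiableAt ℝ (fun y => d 0 * (wEE T 0 y).2 +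
        (d 1 * (wEE T 1 y).2 + d 2 * (wEE T 2 y).2)) x := (E0'.const_mul _).add s5
    have s3 : DifferentiableAt ℝ (fun y => c 2 * (wE T 2 y).2 + (d 0 * (wEE T 0 y).2 +
        (d 1 * (wEE T 1 y).2 + d 2 * (wEE T 2 y).2))) x := (D2'.const_mul _).add s4
    have s2 : DifferentiableAt ℝ (fun y => c 1 * (wE T 1 y).2 + (c 2 * (wE T 2 y).2 +
        (d 0 * (wEE T 0 y).2 + (d 1 * (wEE T 1 y).2 + d 2 * (wEE T 2 y).2)))) x :=
      (D1'.const_mul _).add s3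
    have hA : div2 v x =
        c 0 * div2 (wE T 0) x + c 1 * div2 (wE T 1) x + c 2 * div2 (wE T 2) x
      + d 0 * div2 (wEE T 0) x + d 1 * div2 (wEE T 1) x + d 2 * div2 (wEE T 2) x := by
      simp only [div2, pd1, pd2, hv1, hv2]
      rw [fderiv_comb _ D0 t2, fderiv_comb _ D1 t3, fderiv_comb _ D2 t4,
        fderiv_comb _ E0 t5, fderiv_comb _ E1 (E2.const_mul _), fderiv_cmul _ E2,
        fderiv_comb _ D0' s2, fderiv_comb _ D1' s3, fderiv_comb _ D2' s4,
        fderiv_comb _ E0' s5, fderiv_comb _ E1' (E2'.const_mul _), fderiv_cmul _ E2']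
      ring
    rw [hA, T.div2_wE 0, T.div2_wE 1, T.div2_wE 2, T.div2_wEE 0, T.div2_wEE 1, T.div2_wEE 2]
    ring

end Triangle

namespace Triangle

variable (T : Triangle)

lemma quad_to_lam {f : V2 → ℝ} (h : IsPolyDeg 2 f) :
    ∃ pa pb pc pd pe pf : ℝ, ∀ x : V2,
      f x = pa + pb * T.lam 0 x + pc * T.lam 1 x + pd * (T.lam 0 x * T.lam 0 x)
        + pe * (T.lam 0 x * T.lam 1 x) + pf * (T.lam 1 x * T.lam 1 x) := by
  obtain ⟨A, Bq, Cq, D, E, F, hx⟩ := isPolyDeg2_coeffs h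
  refine ⟨A + Bq * (T.a 2).1 + Cq * (T.a 2).2 + D * ((T.a 2).1 * (T.a 2).1)
      + E * ((T.a 2).1 * (T.a 2).2) + F * ((T.a 2).2 * (T.a 2).2),
    Bq * (T.v1).1 + Cq * (T.v1).2 + 2 * D * ((T.a 2).1 * (T.v1).1)
      + E * ((T.a 2).1 * (T.v1).2 + (T.v1).1 * (T.a 2).2) + 2 * F * ((T.a 2).2 * (T.v1).2),
    Bq * (T.v2).1 + Cq * (T.v2).2 + 2 * D * ((T.a 2).1 * (T.v2).1)
      + E * ((T.a 2).1 * (T.v2).2 + (T.v2).1 * (T.a 2).2) + 2 * F * ((T.a 2).2 * (T.v2).2),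
    D * ((T.v1).1 * (T.v1).1) + E * ((T.v1).1 * (T.v1).2) + F * ((T.v1).2 * (T.v1).2),
    2 * D * ((T.v1).1 * (T.v2).1) + E * ((T.v1).1 * (T.v2).2 + (T.v2).1 * (T.v1).2)
      + 2 * F * ((T.v1).2 * (T.v2).2),
    D * ((T.v2).1 * (T.v2).1) + E * ((T.v2).1 * (T.v2).2) + F * ((T.v2).2 * (T.v2).2),
    fun x => ?_⟩
  have h1 : x.1 = (T.a 2).1 + T.lam 0 x * (T.v1).1 + T.lam 1 x * (T.v2).1 := by
    conv_lhs => rw [T.point_repr x]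
    simp [smul_eq_mul]
  have h2 : x.2 = (T.a 2).2 + T.lam 0 x * (T.v1).2 + T.lam 1 x * (T.v2).2 := by
    conv_lhs => rw [T.point_repr x]
    simp [smul_eq_mul]
  rw [hx x, h1, h2]
  ring

lemma forward (v : V2 → V2) (hmem2 : memP2m T v) (hdiv : ∀ x ∈ triSet T, div2 v x = 0) :
    ∃ c d : Fin 3 → ℝ,
      ∀ x, v x = ∑ i : Fin 3, c i • wE T i x + ∑ i : Fin 3, d i • wEE T i x := by
  obtain ⟨⟨h1, h2⟩, hN⟩ := hmem2
  obtain ⟨pa, pb, pc, pd, pe, pf, hP⟩ := T.quad_to_lam h1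
  obtain ⟨qa, qb, qc, qd, qe, qf, hQ⟩ := T.quad_to_lam h2
  -- vertex values of barycentric coordinates
  have L00 : T.lam 0 (T.a 0) = 1 := by simp [T.lam_apply]
  have L10 : T.lam 1 (T.a 0) = 0 := by simp [T.lam_apply]
  have L01 : T.lam 0 (T.a 1) = 0 := by simp [T.lam_apply]
  have L11 : T.lam 1 (T.a 1) = 1 := by simp [T.lam_apply]
  have L02 : T.lam 0 (T.a 2) = 0 := by simp [T.lam_apply]
  have L12 : T.lam 1 (T.a 2) = 0 := by simp [T.lam_apply]
  have hB2x : (T.B 2).1 = -(T.B 0).1 - (T.B 1).1 := by have := T.sumB1; linarith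
  have hB2y : (T.B 2).2 = -(T.B 0).2 - (T.B 1).2 := by have := T.sumB2; linarith
  -- divergence identity
  have hdiveq : ∀ x : V2, div2 v x =
      (pb + 2*pd*T.lam 0 x + pe*T.lam 1 x) * (T.B 0).1
      + (pc + pe*T.lam 0 x + 2*pf*T.lam 1 x) * (T.B 1).1
      + ((qb + 2*qd*T.lam 0 x + qe*T.lam 1 x) * (T.B 0).2
      + (qc + qe*T.lam 0 x + 2*qf*T.lam 1 x) * (T.B 1).2) := by
    intro x
    have hv1 : (fun y => (v y).1) = fun y => pa + pb * T.lam 0 y + pc * T.lam 1 y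
        + pd * (T.lam 0 y * T.lam 0 y) + pe * (T.lam 0 y * T.lam 1 y)
        + pf * (T.lam 1 y * T.lam 1 y) := funext hP
    have hv2 : (fun y => (v y).2) = fun y => qa + qb * T.lam 0 y + qc * T.lam 1 y
        + qd * (T.lam 0 y * T.lam 0 y) + qe * (T.lam 0 y * T.lam 1 y)
        + qf * (T.lam 1 y * T.lam 1 y) := funext hQ
    rw [div2, pd1, pd2, hv1, hv2, T.fderiv_quad, T.fderiv_quad]
    simp only [dot2]
    ring
  have hmem : ∀ j : Fin 3, T.a j ∈ triSet T :=
    fun j => subset_convexHull ℝ _ ⟨j, rfl⟩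
  have hE0 : pb * (T.B 0).1 + pc * (T.B 1).1 + qb * (T.B 0).2 + qc * (T.B 1).2 = 0 := by
    have h := hdiv (T.a 2) (hmem 2)
    rw [hdiveq, L02, L12] at h
    linear_combination h
  have hE1 : 2*pd * (T.B 0).1 + pe * (T.B 1).1 + 2*qd * (T.B 0).2 + qe * (T.B 1).2 = 0 := by
    have h := hdiv (T.a 0) (hmem 0)
    rw [hdiveq, L00, L10] at h
    linear_combination h - hE0
  have hE2 : pe * (T.B 0).1 + 2*pf * (T.B 1).1 + qe * (T.B 0).2 + 2*qf * (T.B 1).2 = 0 := by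
    have h := hdiv (T.a 1) (hmem 1)
    rw [hdiveq, L01, L11] at h
    linear_combination h - hE0
  -- barycentric coordinates along the edges
  have lep : ∀ (k j : Fin 3) (s : ℝ), T.lam k (epara T j s)
      = (1-s) * T.lam k (T.a (j+1)) + s * T.lam k (T.a (j+2)) := fun k j s => T.lam_epara k j s
  have l00 : ∀ s : ℝ, T.lam 0 (epara T 0 s) = 0 := by
    intro s; rw [lep, show ((0:Fin 3)+1) = 1 from rfl, show ((0:Fin 3)+2) = 2 from rfl,
      T.lam_apply, T.lam_apply]; norm_num [Fin.ext_iff]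
  have l10 : ∀ s : ℝ, T.lam 1 (epara T 0 s) = 1 - s := by
    intro s; rw [lep, show ((0:Fin 3)+1) = 1 from rfl, show ((0:Fin 3)+2) = 2 from rfl,
      T.lam_apply, T.lam_apply]; norm_num [Fin.ext_iff]
  have l01 : ∀ s : ℝ, T.lam 0 (epara T 1 s) = s := by
    intro s; rw [lep, show ((1:Fin 3)+1) = 2 from rfl, show ((1:Fin 3)+2) = 0 from rfl,
      T.lam_apply, T.lam_apply]; norm_num [Fin.ext_iff]
  have l11 : ∀ s : ℝ, T.lam 1 (epara T 1 s) = 0 := by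
    intro s; rw [lep, show ((1:Fin 3)+1) = 2 from rfl, show ((1:Fin 3)+2) = 0 from rfl,
      T.lam_apply, T.lam_apply]; norm_num [Fin.ext_iff]
  have l02 : ∀ s : ℝ, T.lam 0 (epara T 2 s) = 1 - s := by
    intro s; rw [lep, show ((2:Fin 3)+1) = 0 from rfl, show ((2:Fin 3)+2) = 1 from rfl,
      T.lam_apply, T.lam_apply]; norm_num [Fin.ext_iff]
  have l12 : ∀ s : ℝ, T.lam 1 (epara T 2 s) = s := by
    intro s; rw [lep, show ((2:Fin 3)+1) = 0 from rfl, show ((2:Fin 3)+2) = 1 from rfl,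
      T.lam_apply, T.lam_apply]; norm_num [Fin.ext_iff]
  -- edge 0 : normal condition
  obtain ⟨mu0, hmu0, hn0⟩ := T.nrm_eq_smul 0
  obtain ⟨al0, be0, hab0⟩ := hN 0
  have hgen0 : ∀ s : ℝ, s ∈ Set.Icc (0:ℝ) 1 → mu0 * ((pa + pc*(1-s) + pf*((1-s)*(1-s))) * (T.B 0).1
      + (qa + qc*(1-s) + qf*((1-s)*(1-s))) * (T.B 0).2) = al0 + be0 * s := by
    intro s hs
    have h := hab0 s hs
    rw [hn0, dot2_smul_right] at h
    simp only [dot2] at h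
    rw [hP, hQ, l00, l10] at h
    linear_combination h
  have hC0 : mu0 * (pf * (T.B 0).1 + qf * (T.B 0).2) = 0 := by
    have e0 := hgen0 0 (by norm_num)
    have e1 := hgen0 1 (by norm_num)
    have eh := hgen0 (1/2) (by norm_num)
    linear_combination 2*e0 + 2*e1 - 4*eh
  have hN0 : pf * (T.B 0).1 + qf * (T.B 0).2 = 0 :=
    (mul_eq_zero.mp hC0).resolve_left hmu0
  -- edge 1
  obtain ⟨mu1, hmu1, hn1⟩ := T.nrm_eq_smul 1
  obtain ⟨al1, be1, hab1⟩ := hN 1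
  have hgen1 : ∀ s : ℝ, s ∈ Set.Icc (0:ℝ) 1 → mu1 * ((pa + pb*s + pd*(s*s)) * (T.B 1).1
      + (qa + qb*s + qd*(s*s)) * (T.B 1).2) = al1 + be1 * s := by
    intro s hs
    have h := hab1 s hs
    rw [hn1, dot2_smul_right] at h
    simp only [dot2] at h
    rw [hP, hQ, l01, l11] at h
    linear_combination h
  have hC1 : mu1 * (pd * (T.B 1).1 + qd * (T.B 1).2) = 0 := by
    have e0 := hgen1 0 (by norm_num)
    have e1 := hgen1 1 (by norm_num)
    have eh := hgen1 (1/2) (by norm_num)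
    linear_combination 2*e0 + 2*e1 - 4*eh
  have hN1 : pd * (T.B 1).1 + qd * (T.B 1).2 = 0 :=
    (mul_eq_zero.mp hC1).resolve_left hmu1
  -- edge 2
  obtain ⟨mu2, hmu2, hn2⟩ := T.nrm_eq_smul 2
  obtain ⟨al2, be2, hab2⟩ := hN 2
  have hgen2 : ∀ s : ℝ, s ∈ Set.Icc (0:ℝ) 1 → mu2 *
      ((pa + pb*(1-s) + pc*s + pd*((1-s)*(1-s)) + pe*((1-s)*s) + pf*(s*s)) * (T.B 2).1
      + (qa + qb*(1-s) + qc*s + qd*((1-s)*(1-s)) + qe*((1-s)*s) + qf*(s*s)) * (T.B 2).2)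
      = al2 + be2 * s := by
    intro s hs
    have h := hab2 s hs
    rw [hn2, dot2_smul_right] at h
    simp only [dot2] at h
    rw [hP, hQ, l02, l12] at h
    linear_combination h
  have hC2 : mu2 * ((pd - pe + pf) * (T.B 2).1 + (qd - qe + qf) * (T.B 2).2) = 0 := by
    have e0 := hgen2 0 (by norm_num)
    have e1 := hgen2 1 (by norm_num)
    have eh := hgen2 (1/2) (by norm_num)
    linear_combination 2*e0 + 2*e1 - 4*eh
  have hres : (pd - pe + pf) * (T.B 2).1 + (qd - qe + qf) * (T.B 2).2 = 0 :=
    (mul_eq_zero.mp hC2).resolve_left hmu2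
  have hN2 : (pd - pe + pf) * ((T.B 0).1 + (T.B 1).1)
      + (qd - qe + qf) * ((T.B 0).2 + (T.B 1).2) = 0 := by
    linear_combination -hres + (pd - pe + pf) * hB2x + (qd - qe + qf) * hB2y
  -- free parameters
  obtain ⟨dl, hdl⟩ : ∃ r : ℝ, r = (T.B 0).1 * (T.B 1).2 - (T.B 0).2 * (T.B 1).1 := ⟨_, rfl⟩
  have hdlne : dl ≠ 0 := by
    rw [hdl]
    have := T.delta_ne
    simpa [cross2] using this
  obtain ⟨Ra, hRa⟩ : ∃ r : ℝ, r = -(pa * (T.B 1).1 + qa * (T.B 1).2) := ⟨_, rfl⟩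
  obtain ⟨Rb, hRb⟩ : ∃ r : ℝ, r = -(pb * (T.B 1).1 + qb * (T.B 1).2) := ⟨_, rfl⟩
  obtain ⟨Rc, hRc⟩ : ∃ r : ℝ, r = -(pc * (T.B 1).1 + qc * (T.B 1).2) := ⟨_, rfl⟩
  obtain ⟨Rf, hRf⟩ : ∃ r : ℝ, r = -(pf * (T.B 1).1 + qf * (T.B 1).2) := ⟨_, rfl⟩
  obtain ⟨Sa, hSa⟩ : ∃ r : ℝ, r = pa * (T.B 0).1 + qa * (T.B 0).2 := ⟨_, rfl⟩
  obtain ⟨Sc, hSc⟩ : ∃ r : ℝ, r = pc * (T.B 0).1 + qc * (T.B 0).2 := ⟨_, rfl⟩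
  have hSdRf : pd * (T.B 0).1 + qd * (T.B 0).2 = Rf := by
    linear_combination (1/3) * (hN2 + hE1 + hE2 - hN0 - hN1) - hRf
  -- solved forms
  have spa : pa = (Ra * (T.B 0).2 + Sa * (T.B 1).2) / dl := by
    rw [eq_div_iff hdlne]
    linear_combination pa * hdl - (T.B 0).2 * hRa - (T.B 1).2 * hSa
  have sqa : qa = (-(Ra * (T.B 0).1) - Sa * (T.B 1).1) / dl := by
    rw [eq_div_iff hdlne]
    linear_combination qa * hdl + (T.B 0).1 * hRa + (T.B 1).1 * hSa
  have spb : pb = (Rb * (T.B 0).2 + Rc * (T.B 1).2) / dl := by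
    rw [eq_div_iff hdlne]
    linear_combination pb * hdl - (T.B 0).2 * hRb - (T.B 1).2 * hRc + (T.B 1).2 * hE0
  have sqb : qb = (-(Rb * (T.B 0).1) - Rc * (T.B 1).1) / dl := by
    rw [eq_div_iff hdlne]
    linear_combination qb * hdl + (T.B 0).1 * hRb + (T.B 1).1 * hRc - (T.B 1).1 * hE0
  have spc : pc = (Rc * (T.B 0).2 + Sc * (T.B 1).2) / dl := by
    rw [eq_div_iff hdlne]
    linear_combination pc * hdl - (T.B 0).2 * hRc - (T.B 1).2 * hSc
  have sqc : qc = (-(Rc * (T.B 0).1) - Sc * (T.B 1).1) / dl := by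
    rw [eq_div_iff hdlne]
    linear_combination qc * hdl + (T.B 0).1 * hRc + (T.B 1).1 * hSc
  have spd : pd = (Rf * (T.B 1).2) / dl := by
    rw [eq_div_iff hdlne]
    linear_combination pd * hdl - (T.B 0).2 * hN1 + (T.B 1).2 * hSdRf
  have sqd : qd = (-(Rf * (T.B 1).1)) / dl := by
    rw [eq_div_iff hdlne]
    linear_combination qd * hdl + (T.B 0).1 * hN1 - (T.B 1).1 * hSdRf
  have spe : pe = (2 * Rf * (T.B 0).2 + 2 * Rf * (T.B 1).2) / dl := by
    rw [eq_div_iff hdlne]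
    linear_combination pe * hdl - (T.B 0).2 * hE1 + 2 * (T.B 0).2 * hSdRf
      + (T.B 1).2 * hE2 - 2 * (T.B 1).2 * hRf
  have sqe : qe = (-(2 * Rf * (T.B 0).1) - 2 * Rf * (T.B 1).1) / dl := by
    rw [eq_div_iff hdlne]
    linear_combination qe * hdl + (T.B 0).1 * hE1 - 2 * (T.B 0).1 * hSdRf
      - (T.B 1).1 * hE2 + 2 * (T.B 1).1 * hRf
  have spf : pf = (Rf * (T.B 0).2) / dl := by
    rw [eq_div_iff hdlne]
    linear_combination pf * hdl - (T.B 0).2 * hRf + (T.B 1).2 * hN0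
  have sqf : qf = (-(Rf * (T.B 0).1)) / dl := by
    rw [eq_div_iff hdlne]
    linear_combination qf * hdl + (T.B 0).1 * hRf - (T.B 1).1 * hN0
  refine ⟨![(12*Ra - 6*Sa + 6*Rc + 4*Rf)/(18*dl),
            (-6*Ra + 12*Sa + 6*Rc + 4*Rf)/(18*dl),
            (-6*Ra - 6*Sa - 12*Rc - 14*Rf)/(18*dl)],
          ![(9*Rb + 12*Ra - 6*Sa - 3*Rc - 2*Rf)/(18*dl),
            (9*Sc - 6*Ra + 12*Sa - 3*Rc - 2*Rf)/(18*dl),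
            (-6*Ra - 6*Sa - 3*Rc - 2*Rf)/(18*dl)], fun x => ?_⟩
  rw [Fin.sum_univ_three, Fin.sum_univ_three]
  simp only [Matrix.cons_val_zero, Matrix.cons_val_one, Matrix.head_cons, Matrix.cons_val_two,
    Matrix.tail_cons]
  rw [T.wE_apply 0 x, T.wE_apply 1 x, T.wE_apply 2 x, T.wEE_apply 0 x, T.wEE_apply 1 x,
    T.wEE_apply 2 x]
  simp only [show ((0:Fin 3)+1) = 1 from rfl, show ((0:Fin 3)+2) = 2 from rfl,
    show ((1:Fin 3)+1) = 2 from rfl, show ((1:Fin 3)+2) = 0 from rfl,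
    show ((2:Fin 3)+1) = 0 from rfl, show ((2:Fin 3)+2) = 1 from rfl]
  apply Prod.ext
  · rw [hP x]
    simp only [Prod.fst_add, Prod.smul_fst, smul_eq_mul, Jb]
    rw [T.lam2_eq x]
    simp only [hB2x, hB2y]
    rw [spa, spb, spc, spd, spe, spf]
    field_simp
    ring
  · rw [hQ x]
    simp only [Prod.snd_add, Prod.smul_snd, smul_eq_mul, Jb]
    rw [T.lam2_eq x]
    simp only [hB2x, hB2y]
    rw [sqa, sqb, sqc, sqd, sqe, sqf]
    field_simp
    ring

end Triangle

namespace Triangle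

variable (T : Triangle)

lemma indep6 (c d : Fin 3 → ℝ)
    (H : ∀ x, (∑ i : Fin 3, c i • wE T i x) + ∑ i : Fin 3, d i • wEE T i x = 0) :
    c = 0 ∧ d = 0 := by
  have hB2x : (T.B 2).1 = -(T.B 0).1 - (T.B 1).1 := by have := T.sumB1; linarith
  have hB2y : (T.B 2).2 = -(T.B 0).2 - (T.B 1).2 := by have := T.sumB2; linarith
  have hdlne : (T.B 0).1 * (T.B 1).2 - (T.B 0).2 * (T.B 1).1 ≠ 0 := by
    have := T.delta_ne
    simpa [cross2] using this
  have key : ∀ u t : ℝ,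
      (c 0 * ((4*t - 6*(u*t) - 3*(t*t))) + c 1 * (-1 + 2*u + 4*t - 6*(u*t) - 3*(t*t))
        + c 2 * (2*t - 6*(u*t) - 3*(t*t)) + 2*(d 0)*u - 2*(d 2)*(1 - u - t) = 0)
      ∧ (c 0 * (-1 + 4*u + 2*t - 3*(u*u) - 6*(u*t)) + c 1 * (4*u - 3*(u*u) - 6*(u*t))
        + c 2 * (2*u - 3*(u*u) - 6*(u*t)) + 2*(d 1)*t - 2*(d 2)*(1 - u - t) = 0) := by
    intro u t
    have h := H (T.a 2 + u • T.v1 + t • T.v2)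
    rw [Fin.sum_univ_three, Fin.sum_univ_three, T.wE_apply, T.wE_apply, T.wE_apply,
      T.wEE_apply, T.wEE_apply, T.wEE_apply] at h
    simp only [show ((0:Fin 3)+1) = 1 from rfl, show ((0:Fin 3)+2) = 2 from rfl,
      show ((1:Fin 3)+1) = 2 from rfl, show ((1:Fin 3)+2) = 0 from rfl,
      show ((2:Fin 3)+1) = 0 from rfl, show ((2:Fin 3)+2) = 1 from rfl] at h
    simp only [T.lam0_psi, T.lam1_psi, T.lam2_psi, Jb, hB2x, hB2y] at h
    have h1 := congrArg Prod.fst h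
    have h2 := congrArg Prod.snd h
    simp only [Prod.fst_add, Prod.snd_add, Prod.smul_fst, Prod.smul_snd, smul_eq_mul,
      Prod.fst_zero, Prod.snd_zero] at h1 h2
    constructor
    · have hz : (c 0 * ((4*t - 6*(u*t) - 3*(t*t))) + c 1 * (-1 + 2*u + 4*t - 6*(u*t) - 3*(t*t))
          + c 2 * (2*t - 6*(u*t) - 3*(t*t)) + 2*(d 0)*u - 2*(d 2)*(1 - u - t))
          * ((T.B 0).1 * (T.B 1).2 - (T.B 0).2 * (T.B 1).1) = 0 := by
        linear_combination (-(T.B 1).1) * h1 - (T.B 1).2 * h2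
      exact (mul_eq_zero.mp hz).resolve_right hdlne
    · have hz : (c 0 * (-1 + 4*u + 2*t - 3*(u*u) - 6*(u*t)) + c 1 * (4*u - 3*(u*u) - 6*(u*t))
          + c 2 * (2*u - 3*(u*u) - 6*(u*t)) + 2*(d 1)*t - 2*(d 2)*(1 - u - t))
          * ((T.B 0).1 * (T.B 1).2 - (T.B 0).2 * (T.B 1).1) = 0 := by
        linear_combination (T.B 0).1 * h1 + (T.B 0).2 * h2
      exact (mul_eq_zero.mp hz).resolve_right hdlne
  obtain ⟨r00, s00⟩ := key 0 0
  obtain ⟨r10, s10⟩ := key 1 0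
  obtain ⟨r01, s01⟩ := key 0 1
  obtain ⟨r11, s11⟩ := key 1 1
  have hc0 : c 0 = 0 := by linarith
  have hc1 : c 1 = 0 := by linarith
  have hc2 : c 2 = 0 := by linarith
  have hd0 : d 0 = 0 := by linarith
  have hd1 : d 1 = 0 := by linarith
  have hd2 : d 2 = 0 := by linarith
  constructor
  · funext i
    fin_cases i <;> simp only [Pi.zero_apply] <;>
      first | exact hc0 | exact hc1 | exact hc2
  · funext i
    fin_cases i <;> simp only [Pi.zero_apply] <;>
      first | exact hd0 | exact hd1 | exact hd2

end Triangle


/-- the divergence-free subspace `Z_T` of `P^{2-}(T)` is spanned by the six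
functions `w_{T,e_i}` and `w_{T,e_j,e_k}`, and these six functions are linearly
independent, so `dim Z_T = 6`. -/
theorem stmt4 (T : Triangle) :
    (∀ v, (memP2m T v ∧ ∀ x ∈ triSet T, div2 v x = 0) ↔
      ∃ c d : Fin 3 → ℝ,
        ∀ x, v x = ∑ i : Fin 3, c i • wE T i x + ∑ i : Fin 3, d i • wEE T i x) ∧
    (∀ c d : Fin 3 → ℝ,
      (∀ x, ∑ i : Fin 3, c i • wE T i x + ∑ i : Fin 3, d i • wEE T i x = 0) →
      c = 0 ∧ d = 0) := by
  constructor
  · intro v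
    constructor
    · rintro ⟨hm, hd⟩
      exact T.forward v hm hd
    · rintro ⟨c, d, hv⟩
      exact T.backward v c d hv
  · intro c d H
    exact T.indep6 c d H
end
end

section
/- On a non-degenerate triangle T of area S, with edge e_i of length d_i opposite vertex a_i, the function y_{T,e_j,e_k} := −(2/d_i) λ_i n_i satisfies div y_{T,e_j,e_k} = 1/S, where n_i is the unit outward normal of edge e_i. -/
open MeasureTheory
open scoped Classical

noncomputable section

/-- `y_{T,e_j,e_k} := −(2/d_i) λ_i n_i` (indexed by the remaining index `i`). -/
def yEE (T : Triangle) (i : Fin 3) : V2 → V2 :=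
  fun x => (-(2 / elen T i) * T.lam i x) • T.nrm i


lemma hasf_aff (A B C : ℝ) (x : V2) :
    HasFDerivAt (fun y : V2 => A*y.1 + B*y.2 + C)
      (A • (ContinuousLinearMap.fst ℝ ℝ ℝ) + B • (ContinuousLinearMap.snd ℝ ℝ ℝ)) x :=
  ((hasFDerivAt_fst.const_mul A).add (hasFDerivAt_snd.const_mul B)).add_const C

lemma pd1_aff (A B C : ℝ) (x : V2) : pd1 (fun y : V2 => A*y.1 + B*y.2 + C) x = A := by
  rw [pd1, (hasf_aff A B C x).fderiv]; simp

lemma pd2_aff (A B C : ℝ) (x : V2) : pd2 (fun y : V2 => A*y.1 + B*y.2 + C) x = B := by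
  rw [pd2, (hasf_aff A B C x).fderiv]; simp

lemma affine_coords (L : V2 →ₗ[ℝ] ℝ) (y : V2) : L y = L (1,0) * y.1 + L (0,1) * y.2 := by
  have hy : (y : V2) = y.1 • ((1:ℝ),(0:ℝ)) + y.2 • ((0:ℝ),(1:ℝ)) := by
    apply Prod.ext <;> simp
  calc L y = L (y.1 • ((1:ℝ),(0:ℝ)) + y.2 • ((0:ℝ),(1:ℝ))) := by rw [← hy]
    _ = y.1 * L (1,0) + y.2 * L (0,1) := by
        rw [map_add, LinearMap.map_smul, LinearMap.map_smul, smul_eq_mul, smul_eq_mul]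
    _ = _ := by ring

lemma fin3cases (i : Fin 3) : i = 0 ∨ i = 1 ∨ i = 2 := by fin_cases i <;> simp

lemma cyc_cross (a : Fin 3 → V2) (i : Fin 3) :
    ((a (i+1)).1 - (a i).1) * ((a (i+2)).2 - (a i).2)
      - ((a (i+1)).2 - (a i).2) * ((a (i+2)).1 - (a i).1)
    = cross2 (a 1 - a 0) (a 2 - a 0) := by
  rcases fin3cases i with rfl | rfl | rfl <;>
      simp only [cross2, Prod.fst_sub, Prod.snd_sub, Fin.isValue, Fin.reduceAdd] <;>
    ring

lemma nondeg (g1' g2' g1'' g2'' A1 A2 B1 B2 : ℝ)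
    (h1 : g1'*A1+g2'*A2 = 1) (h2 : g1'*B1+g2'*B2 = 0)
    (h4 : g1''*B1+g2''*B2 = 1) :
    A1*B2 - A2*B1 ≠ 0 := by
  intro h
  have key : (g1'*g2''-g2'*g1'')*(A1*B2-A2*B1) = 1 := by
    linear_combination (g1''*B1+g2''*B2)*h1 - (g1''*A1+g2''*A2)*h2 + h4
  rw [h, mul_zero] at key
  exact zero_ne_one key

lemma keylem (g1 g2 c n1 n2 t1 t2 ct p1 p2 q1 q2 r1 r2 : ℝ)
    (hn : n1^2+n2^2 = 1) (ht : t1^2+t2^2 = 1)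
    (hot : n1*t1+n2*t2 = 0) (hor : 0 < n1*t2-n2*t1)
    (hu1 : r1 - q1 = ct*t1) (hu2 : r2 - q2 = ct*t2)
    (hp : g1*p1+g2*p2+c = 1) (hq : g1*q1+g2*q2+c = 0) (hr : g1*r1+g2*r2+c = 0)
    (hout : n1*(p1-q1)+n2*(p2-q2) < 0)
    (hnd : (q1-p1)*(r2-p2) - (q2-p2)*(r1-p1) ≠ 0) :
    -(2/|ct|)*(n1*g1+n2*g2) = 1 / (|(q1-p1)*(r2-p2) - (q2-p2)*(r1-p1)|/2) := by
  have h2 : (n1*t2-n2*t1)^2 = 1 := by nlinarith [hn, ht, hot]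
  have hcr : n1*t2-n2*t1 = 1 := by
    nlinarith [h2, hor, sq_nonneg (n1*t2-n2*t1-1), sq_nonneg (n1*t2-n2*t1+1)]
  have hn1 : n1 = t2 := by linear_combination t1*hot + t2*hcr - n1*ht
  have hn2 : n2 = -t1 := by linear_combination t2*hot - t1*hcr - n2*ht
  subst hn1 hn2
  have hct : ct ≠ 0 := by
    intro h
    apply hnd
    rw [h, zero_mul] at hu1 hu2
    have e1 : r1 = q1 := by linarith
    have e2 : r2 = q2 := by linarith
    rw [e1, e2]; ring
  have hctp : (0:ℝ) < |ct| := abs_pos.mpr hct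
  have h0 : ct*(g1*t1+g2*n1) = 0 := by linear_combination hr - hq - g1*hu1 - g2*hu2
  have hgt : g1*t1+g2*n1 = 0 := by
    rcases mul_eq_zero.mp h0 with h | h
    · exact absurd h hct
    · exact h
  have hgw : g1*(p1-q1) + g2*(p2-q2) = 1 := by linear_combination hp - hq
  have hmu : (g1*n1 - g2*t1) * (n1*(p1-q1) - t1*(p2-q2)) = 1 := by
    linear_combination (g1*(p1-q1)+g2*(p2-q2))*ht - (t1*(p1-q1)+n1*(p2-q2))*hgt + hgw
  set e := n1*(p1-q1) - t1*(p2-q2) with he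
  have heneg : e < 0 := by rw [he]; linarith
  have hK : (q1-p1)*(r2-p2) - (q2-p2)*(r1-p1) = -ct * e := by
    rw [he]; linear_combination (p2-q2)*hu1 - (p1-q1)*hu2
  rw [hK, abs_mul, abs_neg, abs_of_neg heneg]
  have h3 : (0:ℝ) < -e := by linarith
  have hD : (0:ℝ) < |ct| * -e / 2 := div_pos (mul_pos hctp h3) (by norm_num)
  rw [eq_div_iff (ne_of_gt hD)]
  field_simp
  linear_combination hmu

/-- `div y_{T,e_j,e_k} = 1/S` where `S` is the area of `T`. -/
theorem stmt5 (T : Triangle) (i : Fin 3) :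
    ∀ x : V2, div2 (yEE T i) x = 1 / areaT T := by
  intro x
  obtain ⟨L, c, hL⟩ := T.lam_affine i
  set g1 := L (1,0) with hg1
  set g2 := L (0,1) with hg2
  have hlam : ∀ y : V2, T.lam i y = g1*y.1 + g2*y.2 + c := by
    intro y; rw [hL, affine_coords]
  have hdiv : div2 (yEE T i) x
      = -(2/elen T i) * ((T.nrm i).1 * g1 + (T.nrm i).2 * g2) := by
    have h1 : (fun y => (yEE T i y).1) = fun y : V2 =>
        (-(2/elen T i)*(T.nrm i).1*g1)*y.1 + (-(2/elen T i)*(T.nrm i).1*g2)*y.2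
          + (-(2/elen T i)*(T.nrm i).1*c) := by
      funext y
      simp only [yEE, Prod.smul_fst, smul_eq_mul, hlam y]
      ring
    have h2 : (fun y => (yEE T i y).2) = fun y : V2 =>
        (-(2/elen T i)*(T.nrm i).2*g1)*y.1 + (-(2/elen T i)*(T.nrm i).2*g2)*y.2
          + (-(2/elen T i)*(T.nrm i).2*c) := by
      funext y
      simp only [yEE, Prod.smul_snd, smul_eq_mul, hlam y]
      ring
    rw [div2, h1, h2, pd1_aff, pd2_aff]
    ring
  rw [hdiv]
  have hii1 : i ≠ i + 1 := by fin_cases i <;> decide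
  have hii2 : i ≠ i + 2 := by fin_cases i <;> decide
  have hi1i : i + 1 ≠ i := fun h => hii1 h.symm
  have hi2i : i + 2 ≠ i := fun h => hii2 h.symm
  have hi1i2 : i + 1 ≠ i + 2 := by fin_cases i <;> decide
  have hp : g1*(T.a i).1 + g2*(T.a i).2 + c = 1 := by
    rw [← hlam, T.lam_apply i i]; simp
  have hq : g1*(T.a (i+1)).1 + g2*(T.a (i+1)).2 + c = 0 := by
    rw [← hlam, T.lam_apply i (i+1)]; simp [hii1]
  have hr : g1*(T.a (i+2)).1 + g2*(T.a (i+2)).2 + c = 0 := by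
    rw [← hlam, T.lam_apply i (i+2)]; simp [hii2]
  obtain ⟨ct, hpar⟩ := T.tang_parallel i
  have hu1 : (T.a (i+2)).1 - (T.a (i+1)).1 = ct * (T.tang i).1 := by
    have := congrArg Prod.fst hpar; simpa using this
  have hu2 : (T.a (i+2)).2 - (T.a (i+1)).2 = ct * (T.tang i).2 := by
    have := congrArg Prod.snd hpar; simpa using this
  have hn : (T.nrm i).1^2 + (T.nrm i).2^2 = 1 := by
    have := T.nrm_unit i; rw [enorm2] at this; exact Real.sqrt_eq_one.mp this
  have ht : (T.tang i).1^2 + (T.tang i).2^2 = 1 := by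
    have := T.tang_unit i; rw [enorm2] at this; exact Real.sqrt_eq_one.mp this
  have hot : (T.nrm i).1*(T.tang i).1 + (T.nrm i).2*(T.tang i).2 = 0 := T.nrm_orth i
  have hor : 0 < (T.nrm i).1*(T.tang i).2 - (T.nrm i).2*(T.tang i).1 := T.orient i
  have hout : (T.nrm i).1*((T.a i).1-(T.a (i+1)).1)
      + (T.nrm i).2*((T.a i).2-(T.a (i+1)).2) < 0 := by
    have := T.nrm_outward i
    simpa [dot2, Prod.fst_sub, Prod.snd_sub] using this
  have hd : elen T i = |ct| := by
    rw [elen, enorm2, Prod.fst_sub, Prod.snd_sub, hu1, hu2,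
      show (ct*(T.tang i).1)^2 + (ct*(T.tang i).2)^2
        = ct^2 * ((T.tang i).1^2 + (T.tang i).2^2) by ring, ht, mul_one,
      Real.sqrt_sq_eq_abs]
  obtain ⟨L', c', hL'⟩ := T.lam_affine (i+1)
  obtain ⟨L'', c'', hL''⟩ := T.lam_affine (i+2)
  have e1' : L' (1,0)*(T.a i).1 + L' (0,1)*(T.a i).2 + c' = 0 := by
    have h5 := T.lam_apply (i+1) i
    rw [hL', affine_coords] at h5; rw [h5]; simp [hi1i]
  have e2' : L' (1,0)*(T.a (i+1)).1 + L' (0,1)*(T.a (i+1)).2 + c' = 1 := by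
    have h5 := T.lam_apply (i+1) (i+1)
    rw [hL', affine_coords] at h5; rw [h5]; simp
  have e3' : L' (1,0)*(T.a (i+2)).1 + L' (0,1)*(T.a (i+2)).2 + c' = 0 := by
    have h5 := T.lam_apply (i+1) (i+2)
    rw [hL', affine_coords] at h5; rw [h5]; simp [hi1i2]
  have e1'' : L'' (1,0)*(T.a i).1 + L'' (0,1)*(T.a i).2 + c'' = 0 := by
    have h5 := T.lam_apply (i+2) i
    rw [hL'', affine_coords] at h5; rw [h5]; simp [hi2i]
  have e3'' : L'' (1,0)*(T.a (i+2)).1 + L'' (0,1)*(T.a (i+2)).2 + c'' = 1 := by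
    have h5 := T.lam_apply (i+2) (i+2)
    rw [hL'', affine_coords] at h5; rw [h5]; simp
  have hnd : ((T.a (i+1)).1-(T.a i).1)*((T.a (i+2)).2-(T.a i).2)
      - ((T.a (i+1)).2-(T.a i).2)*((T.a (i+2)).1-(T.a i).1) ≠ 0 :=
    nondeg (L' (1,0)) (L' (0,1)) (L'' (1,0)) (L'' (0,1)) _ _ _ _
      (by linear_combination e2' - e1') (by linear_combination e3' - e1')
      (by linear_combination e3'' - e1'')
  have harea : areaT T = |((T.a (i+1)).1-(T.a i).1)*((T.a (i+2)).2-(T.a i).2)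
      - ((T.a (i+1)).2-(T.a i).2)*((T.a (i+2)).1-(T.a i).1)|/2 := by
    rw [areaT, ← cyc_cross T.a i]
  rw [harea, hd]
  exact keylem g1 g2 c (T.nrm i).1 (T.nrm i).2 (T.tang i).1 (T.tang i).2 ct
    (T.a i).1 (T.a i).2 (T.a (i+1)).1 (T.a (i+1)).2 (T.a (i+2)).1 (T.a (i+2)).2
    hn ht hot hor hu1 hu2 hp hq hr hout hnd
end
end

section
/- The sBDFM element is unisolvent: for a non-degenerate triangle T, a function v ∈ P^{2-}(T) is uniquely determined by the nine functionals {mean value over e_i of v·n_i, mean value over e_i of v·n_i (λ_j − λ_k), mean value over e_i of v·t_i}, i = 1,2,3; equivalently, if all nine functionals vanish on v then v = 0. -/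
open MeasureTheory
open scoped Classical

noncomputable section

/-- sBDFM nodal functional: mean over edge `e i` of `v·n_i`. -/
def fN0 (T : Triangle) (i : Fin 3) (v : V2 → V2) : ℝ :=
  ∫ s in (0:ℝ)..1, dot2 (v (epara T i s)) (T.nrm i)

/-- sBDFM nodal functional: mean over edge `e i` of `v·n_i (λ_{i+1} − λ_{i+2})`. -/
def fN1 (T : Triangle) (i : Fin 3) (v : V2 → V2) : ℝ :=
  ∫ s in (0:ℝ)..1,
    dot2 (v (epara T i s)) (T.nrm i) *
      (T.lam (i + 1) (epara T i s) - T.lam (i + 2) (epara T i s))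

/-- sBDFM nodal functional: mean over edge `e i` of `v·t_i`. -/
def fT0 (T : Triangle) (i : Fin 3) (v : V2 → V2) : ℝ :=
  ∫ s in (0:ℝ)..1, dot2 (v (epara T i s)) (T.tang i)

/- ############ auxiliary lemmas ############ -/

lemma quad_of_isPolyDeg {f : V2 → ℝ} (hf : IsPolyDeg 2 f) :
    ∃ A B C D E G : ℝ, ∀ x : V2, f x =
      A + B*x.1 + C*x.2 + D*x.1^2 + E*(x.1*x.2) + G*x.2^2 := by
  obtain ⟨p, hdeg, hev⟩ := hf
  set m : ℕ → ℕ → (Fin 2 →₀ ℕ) := fun i j => Finsupp.single 0 i + Finsupp.single 1 j with hm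
  have hm0 : ∀ i j, (m i j) 0 = i := by intro i j; simp [hm, Finsupp.single_apply]
  have hm1 : ∀ i j, (m i j) 1 = j := by intro i j; simp [hm, Finsupp.single_apply]
  refine ⟨p.coeff (m 0 0), p.coeff (m 1 0), p.coeff (m 0 1), p.coeff (m 2 0),
    p.coeff (m 1 1), p.coeff (m 0 2), ?_⟩
  intro x
  rw [hev, MvPolynomial.eval_eq']
  set S : Finset (Fin 2 →₀ ℕ) := {m 0 0, m 1 0, m 0 1, m 2 0, m 1 1, m 0 2} with hS
  have hsub : p.support ⊆ S := by
    intro d hd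
    have h2 : d 0 + d 1 ≤ 2 := by
      have h := MvPolynomial.le_totalDegree hd
      have hsum : d.sum (fun _ n => n) = d 0 + d 1 := by
        rw [Finsupp.sum_fintype]
        · exact Fin.sum_univ_two d
        · intro; rfl
      omega
    have hdeq : d = m (d 0) (d 1) := by
      ext i; fin_cases i
      · simp [hm0]
      · simp [hm1]
    have hcase : (d 0 = 0 ∧ d 1 = 0) ∨ (d 0 = 1 ∧ d 1 = 0) ∨ (d 0 = 0 ∧ d 1 = 1) ∨
        (d 0 = 2 ∧ d 1 = 0) ∨ (d 0 = 1 ∧ d 1 = 1) ∨ (d 0 = 0 ∧ d 1 = 2) := by omega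
    rcases hcase with ⟨h0,h1⟩|⟨h0,h1⟩|⟨h0,h1⟩|⟨h0,h1⟩|⟨h0,h1⟩|⟨h0,h1⟩ <;>
      rw [hdeq, h0, h1] <;> simp [hS, Finset.mem_insert]
  rw [Finset.sum_subset hsub (fun d _ hd => by
    rw [MvPolynomial.notMem_support_iff.mp hd]; ring)]
  have hne : ∀ i j i' j' : ℕ, (i ≠ i' ∨ j ≠ j') → m i j ≠ m i' j' := by
    intro i j i' j' hij h
    rcases hij with h' | h'
    · exact h' (by rw [← hm0 i j, ← hm0 i' j', h])
    · exact h' (by rw [← hm1 i j, ← hm1 i' j', h])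
  rw [hS]
  rw [Finset.sum_insert (by simp [hne, Finset.mem_insert]),
      Finset.sum_insert (by simp [hne, Finset.mem_insert]),
      Finset.sum_insert (by simp [hne, Finset.mem_insert]),
      Finset.sum_insert (by simp [hne, Finset.mem_insert]),
      Finset.sum_insert (by simp [hne, Finset.mem_insert]),
      Finset.sum_singleton]
  show  p.coeff (m 0 0) * ∏ k : Fin 2, (if k = 0 then x.1 else x.2) ^ (m 0 0) k
      + (p.coeff (m 1 0) * ∏ k : Fin 2, (if k = 0 then x.1 else x.2) ^ (m 1 0) k
      + (p.coeff (m 0 1) * ∏ k : Fin 2, (if k = 0 then x.1 else x.2) ^ (m 0 1) k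
      + (p.coeff (m 2 0) * ∏ k : Fin 2, (if k = 0 then x.1 else x.2) ^ (m 2 0) k
      + (p.coeff (m 1 1) * ∏ k : Fin 2, (if k = 0 then x.1 else x.2) ^ (m 1 1) k
      + p.coeff (m 0 2) * ∏ k : Fin 2, (if k = 0 then x.1 else x.2) ^ (m 0 2) k)))) = _
  rw [Fin.prod_univ_two, Fin.prod_univ_two, Fin.prod_univ_two, Fin.prod_univ_two,
    Fin.prod_univ_two, Fin.prod_univ_two]
  simp only [hm0, hm1]
  norm_num
  ring

lemma int_poly2 (A B C : ℝ) : ∫ s in (0:ℝ)..1, (A + B*s + C*s^2) = A + B/2 + C/3 := by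
  have h : ∀ x ∈ Set.uIcc (0:ℝ) 1,
      HasDerivAt (fun s => A*s + B*s^2/2 + C*s^3/3) (A + B*x + C*x^2) x := by
    intro x _
    have h1 : HasDerivAt (fun s:ℝ => A*s) (A*1) x := (hasDerivAt_id x).const_mul A
    have h2 : HasDerivAt (fun s:ℝ => B*s^2/2) (B*(2*x^1)/2) x :=
      ((hasDerivAt_pow 2 x).const_mul B).div_const 2
    have h3 : HasDerivAt (fun s:ℝ => C*s^3/3) (C*(3*x^2)/3) x :=
      ((hasDerivAt_pow 3 x).const_mul C).div_const 3
    have := (h1.add h2).add h3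
    exact this.congr_deriv (by ring)
  rw [intervalIntegral.integral_eq_sub_of_hasDerivAt h
    (Continuous.intervalIntegrable (by continuity) _ _)]
  ring

lemma unit_sq {u : V2} (h : enorm2 u = 1) : u.1^2 + u.2^2 = 1 := by
  have h0 : (0:ℝ) ≤ u.1^2 + u.2^2 := by positivity
  have := congrArg (fun t => t^2) h
  simpa [enorm2, Real.sq_sqrt h0] using this

lemma rot_of_unit {n t : V2} (hn : n.1^2+n.2^2 = 1) (ht : t.1^2+t.2^2 = 1)
    (ho : dot2 n t = 0) (hor : 0 < cross2 n t) : t = (-n.2, n.1) := by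
  have hc : cross2 n t ^ 2 = 1 := by
    have : cross2 n t ^2 = (n.1^2+n.2^2) * (t.1^2+t.2^2) - (dot2 n t)^2 := by
      simp [cross2, dot2]; ring
    rw [this, hn, ht, ho]; ring
  have hc1 : cross2 n t = 1 := by nlinarith
  simp only [dot2, cross2] at ho hc1
  have e1 : t.1 = -n.2 := by linear_combination (-t.1) * hn + n.1 * ho - n.2 * hc1
  have e2 : t.2 = n.1 := by linear_combination (-t.2) * hn + n.2 * ho + n.1 * hc1
  exact Prod.ext e1 e2

lemma quad_comp (A B C D E G p1 p2 q1 q2 r1 r2 : ℝ) : ∃ A' B' C' D' E' G' : ℝ, ∀ u w : ℝ,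
    A + B*(p1+u*q1+w*r1) + C*(p2+u*q2+w*r2) + D*(p1+u*q1+w*r1)^2
      + E*((p1+u*q1+w*r1)*(p2+u*q2+w*r2)) + G*(p2+u*q2+w*r2)^2
    = A' + B'*u + C'*w + D'*u^2 + E'*(u*w) + G'*w^2 :=
  ⟨A + B*p1 + C*p2 + D*p1^2 + E*(p1*p2) + G*p2^2,
   B*q1 + C*q2 + 2*D*p1*q1 + E*(p1*q2 + p2*q1) + 2*G*p2*q2,
   B*r1 + C*r2 + 2*D*p1*r1 + E*(p1*r2 + p2*r1) + 2*G*p2*r2,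
   D*q1^2 + E*(q1*q2) + G*q2^2,
   2*D*q1*r1 + E*(q1*r2 + q2*r1) + 2*G*q2*r2,
   D*r1^2 + E*(r1*r2) + G*r2^2,
   fun u w => by ring⟩

lemma quad_eq_zero {A B C D E G : ℝ}
    (h : ∀ u w : ℝ, A + B*u + C*w + D*u^2 + E*(u*w) + G*w^2 = 0) :
    A = 0 ∧ B = 0 ∧ C = 0 ∧ D = 0 ∧ E = 0 ∧ G = 0 := by
  have h00 := h 0 0
  have h10 := h 1 0
  have h01 := h 0 1
  have hm0 := h (-1) 0
  have h0m := h 0 (-1)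
  have h11 := h 1 1
  norm_num at h00 h10 h01 hm0 h0m h11
  refine ⟨h00, by linarith, by linarith, by linarith, by linarith, by linarith⟩

/-- unisolvence of the sBDFM element: if all nine nodal functionals
vanish on `v ∈ P^{2-}(T)`, then `v = 0` on `T`. -/
theorem stmt7 (T : Triangle) (v : V2 → V2) (hv : memP2m T v)
    (h : ∀ i : Fin 3, fN0 T i v = 0 ∧ fN1 T i v = 0 ∧ fT0 T i v = 0) :
    ∀ x ∈ triSet T, v x = 0 := by
  obtain ⟨⟨hP, hQ⟩, hN⟩ := hv
  -- basic geometry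
  have htrot : ∀ i, T.tang i = (-(T.nrm i).2, (T.nrm i).1) := fun i =>
    rot_of_unit (unit_sq (T.nrm_unit i)) (unit_sq (T.tang_unit i)) (T.nrm_orth i) (T.orient i)
  have htt : ∀ i, dot2 (T.tang i) (T.tang i) = 1 := by
    intro i
    have := unit_sq (T.tang_unit i)
    simp only [dot2]; linear_combination this
  have hfin3 : ∀ i : Fin 3, i + 1 + 1 = i + 2 ∧ i + 1 + 2 = i ∧ i + 1 ≠ i + 2 := by decide
  -- cross of consecutive tangents is nonzero
  have hcross : ∀ i : Fin 3, cross2 (T.tang i) (T.tang (i+1)) ≠ 0 := by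
    intro i hz
    obtain ⟨c0, hc0⟩ := T.tang_parallel i
    obtain ⟨c1, hc1⟩ := T.tang_parallel (i+1)
    rw [(hfin3 i).1, (hfin3 i).2.1] at hc1
    have hu := unit_sq (T.tang_unit i)
    simp only [cross2] at hz
    have hk1 : (T.tang (i+1)).1 = (dot2 (T.tang i) (T.tang (i+1))) * (T.tang i).1 := by
      simp only [dot2]
      linear_combination (-(T.tang (i+1)).1)*hu - (T.tang i).2 * hz
    have hk2 : (T.tang (i+1)).2 = (dot2 (T.tang i) (T.tang (i+1))) * (T.tang i).2 := by
      simp only [dot2]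
      linear_combination (-(T.tang (i+1)).2)*hu + (T.tang i).1 * hz
    have key : dot2 (T.nrm i) (T.a i - T.a (i+1)) = 0 := by
      have hdiff : T.a i - T.a (i+1) = (T.a i - T.a (i+2)) + (T.a (i+2) - T.a (i+1)) := by
        abel
      have horth := T.nrm_orth i
      simp only [dot2] at horth ⊢
      have e1 : (T.a i - T.a (i+1)).1
          = c1 * (T.tang (i+1)).1 + c0 * (T.tang i).1 := by
        rw [hdiff]; rw [hc0, hc1]; simp [Prod.fst_add, Prod.smul_fst, smul_eq_mul]
      have e2 : (T.a i - T.a (i+1)).2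
          = c1 * (T.tang (i+1)).2 + c0 * (T.tang i).2 := by
        rw [hdiff]; rw [hc0, hc1]; simp [Prod.snd_add, Prod.smul_snd, smul_eq_mul]
      rw [e1, e2, hk1, hk2]
      linear_combination (c1 * (dot2 (T.tang i) (T.tang (i+1))) + c0) * horth
    have := T.nrm_outward i
    rw [key] at this
    exact lt_irrefl 0 this
  -- the three nonzero crosses we use
  have hDc : cross2 (T.tang 0) (T.tang 1) ≠ 0 := by
    have := hcross 0; rwa [show (0:Fin 3)+1 = 1 by decide] at this
  have hr0 : cross2 (T.tang 2) (T.tang 1) ≠ 0 := by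
    have h12 := hcross 1; rw [show (1:Fin 3)+1 = 2 by decide] at h12
    intro hz; apply h12
    simp only [cross2] at hz ⊢; linarith
  have hr1 : cross2 (T.tang 0) (T.tang 2) ≠ 0 := by
    have h20 := hcross 2; rw [show (2:Fin 3)+1 = 0 by decide] at h20
    intro hz; apply h20
    simp only [cross2] at hz ⊢; linarith
  set Dc := cross2 (T.tang 0) (T.tang 1) with hDcdef
  set r0 := cross2 (T.tang 2) (T.tang 1) with hr0def
  set r1 := cross2 (T.tang 0) (T.tang 2) with hr1def
  -- algebraic identities
  have hscalar : ∀ x y : V2, Dc * dot2 x y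
      = dot2 x (T.nrm 1) * dot2 (T.tang 0) y - dot2 x (T.nrm 0) * dot2 (T.tang 1) y := by
    intro x y
    rw [hDcdef, htrot 0, htrot 1]
    simp only [cross2, dot2]; ring
  have hmu : ∀ x : V2, Dc * dot2 x (T.nrm 2)
      = r0 * dot2 x (T.nrm 0) + r1 * dot2 x (T.nrm 1) := by
    intro x
    rw [hDcdef, hr0def, hr1def, htrot 0, htrot 1, htrot 2]
    simp only [cross2, dot2]; ring
  have hdet : dot2 (T.tang 0) (T.tang 2) * r0 + dot2 (T.tang 1) (T.tang 2) * r1 = Dc := by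
    have h2 := htt 2
    rw [hDcdef, hr0def, hr1def]
    simp only [cross2, dot2] at h2 ⊢
    linear_combination (((T.tang 0).1 * (T.tang 1).2 - (T.tang 0).2 * (T.tang 1).1)) * h2
  -- lambda along edges
  have hlam1 : ∀ (i : Fin 3) (s : ℝ), T.lam (i+1) (epara T i s) = 1 - s := by
    intro i s
    obtain ⟨L, c, hL⟩ := T.lam_affine (i+1)
    have e1 := T.lam_apply (i+1) (i+1)
    have e2 := T.lam_apply (i+1) (i+2)
    rw [if_pos rfl] at e1
    rw [if_neg (hfin3 i).2.2] at e2
    have : epara T i s = T.a (i+1) + s • (T.a (i+2) - T.a (i+1)) := rfl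
    rw [this, hL, map_add, _root_.map_smul, map_sub, smul_eq_mul]
    rw [hL] at e1 e2
    linear_combination e1 + s * e2 - s * e1
  have hlam2 : ∀ (i : Fin 3) (s : ℝ), T.lam (i+2) (epara T i s) = s := by
    intro i s
    obtain ⟨L, c, hL⟩ := T.lam_affine (i+2)
    have e1 := T.lam_apply (i+2) (i+1)
    have e2 := T.lam_apply (i+2) (i+2)
    rw [if_neg (Ne.symm (hfin3 i).2.2)] at e1
    rw [if_pos rfl] at e2
    have : epara T i s = T.a (i+1) + s • (T.a (i+2) - T.a (i+1)) := rfl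
    rw [this, hL, map_add, _root_.map_smul, map_sub, smul_eq_mul]
    rw [hL] at e1 e2
    linear_combination e1 + s * e2 - s * e1
  have hIcc : Set.uIcc (0:ℝ) 1 = Set.Icc 0 1 := Set.uIcc_of_le zero_le_one
  -- normal components vanish on the edges
  have hedge : ∀ i : Fin 3, ∀ s ∈ Set.Icc (0:ℝ) 1,
      dot2 (v (epara T i s)) (T.nrm i) = 0 := by
    intro i
    obtain ⟨α, β, hab⟩ := hN i
    have h0 := (h i).1
    have h1 := (h i).2.1
    have e0 : fN0 T i v = α + β/2 + 0/3 := by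
      rw [fN0, intervalIntegral.integral_congr (g := fun s => α + β*s + 0*s^2)
        (fun s hs => by
          rw [hIcc] at hs
          simp only
          rw [hab s hs]; ring), int_poly2]
    have e1 : fN1 T i v = α + (β - 2*α)/2 + (-(2*β))/3 := by
      rw [fN1, intervalIntegral.integral_congr
        (g := fun s => α + (β - 2*α)*s + (-(2*β))*s^2)
        (fun s hs => by
          rw [hIcc] at hs
          simp only
          rw [hab s hs, hlam1 i s, hlam2 i s]; ring), int_poly2]
    rw [h0] at e0
    rw [h1] at e1
    have hβ : β = 0 := by linarith
    have hα : α = 0 := by linarith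
    intro s hs
    rw [hab s hs, hα, hβ]; ring
  -- reference parametrization
  set Φ : ℝ → ℝ → V2 := fun u w =>
    ((T.a 0).1 + u*((T.a 1).1 - (T.a 0).1) + w*((T.a 2).1 - (T.a 0).1),
     (T.a 0).2 + u*((T.a 1).2 - (T.a 0).2) + w*((T.a 2).2 - (T.a 0).2)) with hΦ
  have hep0 : ∀ s : ℝ, epara T 0 s = Φ (1-s) s := by
    intro s
    show seg (T.a (0+1)) (T.a (0+2)) s = _
    rw [show (0:Fin 3)+1 = 1 by decide, show (0:Fin 3)+2 = 2 by decide]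
    simp only [seg, hΦ, Prod.ext_iff, Prod.fst_add, Prod.snd_add, Prod.smul_fst,
      Prod.smul_snd, Prod.fst_sub, Prod.snd_sub, smul_eq_mul]
    constructor <;> ring
  have hep1 : ∀ s : ℝ, epara T 1 s = Φ 0 (1-s) := by
    intro s
    show seg (T.a (1+1)) (T.a (1+2)) s = _
    rw [show (1:Fin 3)+1 = 2 by decide, show (1:Fin 3)+2 = 0 by decide]
    simp only [seg, hΦ, Prod.ext_iff, Prod.fst_add, Prod.snd_add, Prod.smul_fst,
      Prod.smul_snd, Prod.fst_sub, Prod.snd_sub, smul_eq_mul]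
    constructor <;> ring
  have hep2 : ∀ s : ℝ, epara T 2 s = Φ s 0 := by
    intro s
    show seg (T.a (2+1)) (T.a (2+2)) s = _
    rw [show (2:Fin 3)+1 = 0 by decide, show (2:Fin 3)+2 = 1 by decide]
    simp only [seg, hΦ, Prod.ext_iff, Prod.fst_add, Prod.snd_add, Prod.smul_fst,
      Prod.smul_snd, Prod.fst_sub, Prod.snd_sub, smul_eq_mul]
    constructor <;> ring
  -- quadratic representation of normal components in reference coords
  obtain ⟨PA,PB,PC,PD,PE,PG,hPx⟩ := quad_of_isPolyDeg hP
  obtain ⟨QA,QB,QC,QD,QE,QG,hQx⟩ := quad_of_isPolyDeg hQ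
  have hquadF : ∀ nv : V2, ∃ A B C D E G : ℝ, ∀ u w : ℝ,
      dot2 (v (Φ u w)) nv = A + B*u + C*w + D*u^2 + E*(u*w) + G*w^2 := by
    intro nv
    obtain ⟨A',B',C',D',E',G',hq⟩ := quad_comp
      (nv.1*PA + nv.2*QA) (nv.1*PB + nv.2*QB) (nv.1*PC + nv.2*QC)
      (nv.1*PD + nv.2*QD) (nv.1*PE + nv.2*QE) (nv.1*PG + nv.2*QG)
      ((T.a 0).1) ((T.a 0).2) ((T.a 1).1 - (T.a 0).1) ((T.a 1).2 - (T.a 0).2)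
      ((T.a 2).1 - (T.a 0).1) ((T.a 2).2 - (T.a 0).2)
    refine ⟨A',B',C',D',E',G', fun u w => ?_⟩
    have key := hq u w
    have h1 := hPx (Φ u w)
    have h2 := hQx (Φ u w)
    simp only [dot2]
    rw [h1, h2]
    linear_combination key
  obtain ⟨A0,B0,C0,D0,E0,G0,hF0⟩ := hquadF (T.nrm 0)
  obtain ⟨A1,B1,C1,D1,E1,G1,hF1⟩ := hquadF (T.nrm 1)
  obtain ⟨A2,B2,C2,D2,E2,G2,hF2⟩ := hquadF (T.nrm 2)
  set tp := dot2 (T.tang 0) (T.tang 2) with htp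
  set tq := dot2 (T.tang 1) (T.tang 2) with htq
  -- edge vanishing equations
  have E1a : A1 = 0 := by
    have hh := hedge 1 1 (by norm_num)
    rw [hep1 1, hF1] at hh
    linear_combination hh
  have E1b : A1 + C1 + G1 = 0 := by
    have hh := hedge 1 0 (by norm_num)
    rw [hep1 0, hF1] at hh
    linear_combination hh
  have E1c : A1 + C1/2 + G1/4 = 0 := by
    have hh := hedge 1 (1/2) (by norm_num)
    rw [hep1 (1/2), hF1] at hh
    linear_combination hh
  have E2a : A2 = 0 := by
    have hh := hedge 2 0 (by norm_num)
    rw [hep2 0, hF2] at hh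
    linear_combination hh
  have E2b : A2 + B2 + D2 = 0 := by
    have hh := hedge 2 1 (by norm_num)
    rw [hep2 1, hF2] at hh
    linear_combination hh
  have E2c : A2 + B2/2 + D2/4 = 0 := by
    have hh := hedge 2 (1/2) (by norm_num)
    rw [hep2 (1/2), hF2] at hh
    linear_combination hh
  have E0a : A0 + B0 + D0 = 0 := by
    have hh := hedge 0 0 (by norm_num)
    rw [hep0 0, hF0] at hh
    linear_combination hh
  have E0b : A0 + C0 + G0 = 0 := by
    have hh := hedge 0 1 (by norm_num)
    rw [hep0 1, hF0] at hh
    linear_combination hh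
  have E0c : A0 + B0/2 + C0/2 + D0/4 + E0/4 + G0/4 = 0 := by
    have hh := hedge 0 (1/2) (by norm_num)
    rw [hep0 (1/2), hF0] at hh
    linear_combination hh
  -- coefficient relations from n2 = combination of n0, n1
  have hmurel : ∀ u w : ℝ, (Dc*A2 - r0*A0 - r1*A1) + (Dc*B2 - r0*B0 - r1*B1)*u
      + (Dc*C2 - r0*C0 - r1*C1)*w + (Dc*D2 - r0*D0 - r1*D1)*u^2
      + (Dc*E2 - r0*E0 - r1*E1)*(u*w) + (Dc*G2 - r0*G0 - r1*G1)*w^2 = 0 := by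
    intro u w
    have hx := hmu (v (Φ u w))
    rw [hF0, hF1, hF2] at hx
    linear_combination hx
  obtain ⟨RA, RB, RC, RD, RE, RG⟩ := quad_eq_zero hmurel
  -- tangential integral equations
  have hT0 : (A1+B1+D1) + (C1-B1-2*D1+E1)/2 + (D1-E1+G1)/3 = 0 := by
    have e : fT0 T 0 v = (A1+B1+D1)/Dc + ((C1-B1-2*D1+E1)/Dc)/2 + ((D1-E1+G1)/Dc)/3 := by
      rw [fT0, intervalIntegral.integral_congr
        (g := fun s => (A1+B1+D1)/Dc + ((C1-B1-2*D1+E1)/Dc)*s + ((D1-E1+G1)/Dc)*s^2)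
        (fun s hs => by
          rw [hIcc] at hs
          simp only
          have hx0 : dot2 (v (epara T 0 s)) (T.nrm 0) = 0 := hedge 0 s hs
          have hx1 := hF1 (1-s) s
          rw [← hep0 s] at hx1
          have hsc := hscalar (v (epara T 0 s)) (T.tang 0)
          rw [hx0, hx1, htt 0] at hsc
          field_simp
          linear_combination hsc), int_poly2]
    rw [(h 0).2.2] at e
    have e3 : (A1+B1+D1)/Dc + ((C1-B1-2*D1+E1)/Dc)/2 + ((D1-E1+G1)/Dc)/3 = 0 := e.symm
    have e2 : ((A1+B1+D1) + (C1-B1-2*D1+E1)/2 + (D1-E1+G1)/3)/Dc = 0 := by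
      rw [← e3]; ring
    rcases div_eq_zero_iff.mp e2 with h' | h'
    · exact h'
    · exact absurd h' hDc
  have hT1 : (-(A0+C0+G0)) + (C0+2*G0)/2 + (-G0)/3 = 0 := by
    have e : fT0 T 1 v = (-(A0+C0+G0))/Dc + ((C0+2*G0)/Dc)/2 + ((-G0)/Dc)/3 := by
      rw [fT0, intervalIntegral.integral_congr
        (g := fun s => (-(A0+C0+G0))/Dc + ((C0+2*G0)/Dc)*s + ((-G0)/Dc)*s^2)
        (fun s hs => by
          rw [hIcc] at hs
          simp only
          have hx1 : dot2 (v (epara T 1 s)) (T.nrm 1) = 0 := hedge 1 s hs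
          have hx0 := hF0 0 (1-s)
          rw [← hep1 s] at hx0
          have hsc := hscalar (v (epara T 1 s)) (T.tang 1)
          rw [hx0, hx1, htt 1] at hsc
          field_simp
          linear_combination hsc), int_poly2]
    rw [(h 1).2.2] at e
    have e3 := e.symm
    have e2 : ((-(A0+C0+G0)) + (C0+2*G0)/2 + (-G0)/3)/Dc = 0 := by
      rw [← e3]; ring
    rcases div_eq_zero_iff.mp e2 with h' | h'
    · exact h'
    · exact absurd h' hDc
  have hT2 : (tp*A1 - tq*A0) + (tp*B1 - tq*B0)/2 + (tp*D1 - tq*D0)/3 = 0 := by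
    have e : fT0 T 2 v = (tp*A1 - tq*A0)/Dc + ((tp*B1 - tq*B0)/Dc)/2 + ((tp*D1 - tq*D0)/Dc)/3 := by
      rw [fT0, intervalIntegral.integral_congr
        (g := fun s => (tp*A1 - tq*A0)/Dc + ((tp*B1 - tq*B0)/Dc)*s + ((tp*D1 - tq*D0)/Dc)*s^2)
        (fun s hs => by
          rw [hIcc] at hs
          simp only
          have hx0 := hF0 s 0
          have hx1 := hF1 s 0
          rw [← hep2 s] at hx0 hx1
          have hsc := hscalar (v (epara T 2 s)) (T.tang 2)
          rw [hx0, hx1, ← htp, ← htq] at hsc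
          field_simp
          linear_combination hsc), int_poly2]
    rw [(h 2).2.2] at e
    have e3 := e.symm
    have e2 : ((tp*A1 - tq*A0) + (tp*B1 - tq*B0)/2 + (tp*D1 - tq*D0)/3)/Dc = 0 := by
      rw [← e3]; ring
    rcases div_eq_zero_iff.mp e2 with h' | h'
    · exact h'
    · exact absurd h' hDc
  -- solve the linear system
  have zC1 : C1 = 0 := by linarith
  have zG1 : G1 = 0 := by linarith
  have zB2 : B2 = 0 := by linarith
  have zD2 : D2 = 0 := by linarith
  have zA0 : A0 = 0 := by
    have hr : r0 * A0 = 0 := by linear_combination (-1)*RA + Dc*E2a - r1*E1a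
    rcases mul_eq_zero.mp hr with h' | h'
    · exact absurd h' hr0
    · exact h'
  have RB' : r0*B0 + r1*B1 = 0 := by linear_combination Dc*zB2 - RB
  have RD' : r0*D0 + r1*D1 = 0 := by linear_combination Dc*zD2 - RD
  have zC0 : C0 = 0 := by linarith
  have zG0 : G0 = 0 := by linarith
  have hd0 : D0 = -B0 := by linarith
  have key1 : r1*(D1 + B1) = 0 := by linear_combination RD' + RB' - r0*hd0
  have hD1 : D1 = -B1 := by
    rcases mul_eq_zero.mp key1 with h' | h'
    · exact absurd h' hr1
    · linarith
  have zE1 : E1 = -B1 := by linarith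
  have key2 : tp*B1 - tq*B0 = 0 := by
    linear_combination 6*hT2 - 6*tp*E1a + 6*tq*zA0 - 2*tp*hD1 + 2*tq*hd0
  have keyB0 : Dc * B0 = 0 := by linear_combination tp*RB' - r1*key2 - B0*hdet
  have zB0 : B0 = 0 := by
    rcases mul_eq_zero.mp keyB0 with h' | h'
    · exact absurd h' hDc
    · exact h'
  have zB1 : B1 = 0 := by
    have : r1 * B1 = 0 := by linear_combination RB' - r0*zB0
    rcases mul_eq_zero.mp this with h' | h'
    · exact absurd h' hr1
    · exact h'
  have zD0 : D0 = 0 := by linarith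
  have zD1 : D1 = 0 := by linarith
  have zE1' : E1 = 0 := by linarith
  have zE0 : E0 = 0 := by linarith
  -- conclude v vanishes on the image of Φ
  have hzero : ∀ u w : ℝ, v (Φ u w) = 0 := by
    intro u w
    have hd0' : dot2 (v (Φ u w)) (T.nrm 0) = 0 := by
      rw [hF0, zA0, zB0, zC0, zD0, zE0, zG0]; ring
    have hd1' : dot2 (v (Φ u w)) (T.nrm 1) = 0 := by
      rw [hF1, E1a, zB1, zC1, zD1, zE1', zG1]; ring
    have hcn : cross2 (T.nrm 0) (T.nrm 1) ≠ 0 := by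
      have heq : cross2 (T.nrm 0) (T.nrm 1) = Dc := by
        rw [hDcdef, htrot 0, htrot 1]; simp only [cross2]; ring
      rw [heq]; exact hDc
    simp only [dot2] at hd0' hd1'
    have hx1 : cross2 (T.nrm 0) (T.nrm 1) * (v (Φ u w)).1 = 0 := by
      simp only [cross2]
      linear_combination (T.nrm 1).2 * hd0' - (T.nrm 0).2 * hd1'
    have hx2 : cross2 (T.nrm 0) (T.nrm 1) * (v (Φ u w)).2 = 0 := by
      simp only [cross2]
      linear_combination (-(T.nrm 1).1) * hd0' + (T.nrm 0).1 * hd1'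
    have e1 : (v (Φ u w)).1 = 0 := by
      rcases mul_eq_zero.mp hx1 with h' | h'
      · exact absurd h' hcn
      · exact h'
    have e2 : (v (Φ u w)).2 = 0 := by
      rcases mul_eq_zero.mp hx2 with h' | h'
      · exact absurd h' hcn
      · exact h'
    exact Prod.ext e1 e2
  -- finally: every point of the triangle is Φ of something
  intro x hx
  rw [triSet] at hx
  have hrange : Set.range T.a = insert (T.a 0) {T.a 1, T.a 2} := by
    apply Set.eq_of_subset_of_subset
    · rintro y ⟨i, rfl⟩
      fin_cases i <;> simp
    · intro y hy
      simp only [Set.mem_insert_iff, Set.mem_singleton_iff] at hy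
      rcases hy with rfl|rfl|rfl
      exacts [⟨0, rfl⟩, ⟨1, rfl⟩, ⟨2, rfl⟩]
  rw [hrange, convexHull_insert ⟨T.a 1, by simp⟩, convexHull_pair] at hx
  rw [mem_convexJoin] at hx
  obtain ⟨a', ha', z, hz, hxseg⟩ := hx
  rw [Set.mem_singleton_iff] at ha'
  subst ha'
  obtain ⟨u1, u2, _, _, hu12, hzeq⟩ := hz
  obtain ⟨θ, τ, _, _, hθτ, hxeq⟩ := hxseg
  have hz1 : u1 * (T.a 1).1 + u2 * (T.a 2).1 = z.1 := by
    have := congrArg Prod.fst hzeq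
    simpa [Prod.fst_add, Prod.smul_fst, smul_eq_mul] using this
  have hz2 : u1 * (T.a 1).2 + u2 * (T.a 2).2 = z.2 := by
    have := congrArg Prod.snd hzeq
    simpa [Prod.snd_add, Prod.smul_snd, smul_eq_mul] using this
  have hx1c : θ * (T.a 0).1 + τ * z.1 = x.1 := by
    have := congrArg Prod.fst hxeq
    simpa [Prod.fst_add, Prod.smul_fst, smul_eq_mul] using this
  have hx2c : θ * (T.a 0).2 + τ * z.2 = x.2 := by
    have := congrArg Prod.snd hxeq
    simpa [Prod.snd_add, Prod.smul_snd, smul_eq_mul] using this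
  have hx' : x = Φ (τ*u1) (τ*u2) := by
    apply Prod.ext
    · show x.1 = (T.a 0).1 + (τ*u1)*((T.a 1).1 - (T.a 0).1) + (τ*u2)*((T.a 2).1 - (T.a 0).1)
      linear_combination (-1)*hx1c - τ*hz1 + (T.a 0).1*hθτ + (T.a 0).1*τ*hu12
    · show x.2 = (T.a 0).2 + (τ*u1)*((T.a 1).2 - (T.a 0).2) + (τ*u2)*((T.a 2).2 - (T.a 0).2)
      linear_combination (-1)*hx2c - τ*hz2 + (T.a 0).2*hθτ + (T.a 0).2*τ*hu12
  rw [hx']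
  exact hzero _ _
end
end

section
/- On a non-degenerate triangle T, the function φ_{t_i,0} = 6 λ_j λ_k t_i belongs to P^{2-}(T), its mean tangential component over edge e_i equals 1, and all other eight sBDFM nodal functionals vanish on it. -/
open MeasureTheory
open scoped Classical

noncomputable section

/-- The claimed nodal basis function `φ_{t_i,0} = 6 λ_j λ_k t_i` (with `j = i+1`, `k = i+2`). -/
def phiT0 (T : Triangle) (i : Fin 3) : V2 → V2 := fun x =>
  (6 * T.lam (i + 1) x * T.lam (i + 2) x) • T.tang i


-- Auxiliary lemmas

lemma dot2_smul' (c : ℝ) (u v : V2) : dot2 (c • u) v = c * dot2 u v := by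
  simp [dot2, Prod.smul_def, smul_eq_mul]; ring

lemma dot2_comm' (u v : V2) : dot2 u v = dot2 v u := by unfold dot2; ring

lemma dot2_zero_left (v : V2) : dot2 (0 : V2) v = 0 := by simp [dot2]

lemma lam_seg (T : Triangle) (m i : Fin 3) (s : ℝ) :
    T.lam m (epara T i s) =
      (1 - s) * T.lam m (T.a (i + 1)) + s * T.lam m (T.a (i + 2)) := by
  obtain ⟨L, c, h⟩ := T.lam_affine m
  simp only [epara, seg, h, L.map_add, L.map_smul, L.map_sub, smul_eq_mul]
  ring

lemma fin3_facts : ∀ i : Fin 3, i + 1 ≠ i ∧ i + 2 ≠ i ∧ i + 1 ≠ i + 2 ∧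
    (i + 1) + 1 = i + 2 ∧ (i + 1) + 2 = i ∧ (i + 2) + 1 = i ∧ (i + 2) + 2 = i + 1 := by
  decide

lemma lam_edge1 (T : Triangle) (i : Fin 3) (s : ℝ) :
    T.lam (i + 1) (epara T i s) = 1 - s := by
  obtain ⟨-, -, h12, -⟩ := fin3_facts i
  rw [lam_seg, T.lam_apply, T.lam_apply, if_pos rfl, if_neg h12]
  ring

lemma lam_edge2 (T : Triangle) (i : Fin 3) (s : ℝ) :
    T.lam (i + 2) (epara T i s) = s := by
  obtain ⟨-, -, h12, -⟩ := fin3_facts i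
  rw [lam_seg, T.lam_apply, T.lam_apply, if_pos rfl, if_neg (Ne.symm h12)]
  ring

lemma phi_edge_self (T : Triangle) (i : Fin 3) (s : ℝ) :
    phiT0 T i (epara T i s) = (6 * (1 - s) * s) • T.tang i := by
  rw [phiT0, lam_edge1, lam_edge2]

lemma phi_edge_other (T : Triangle) {i i' : Fin 3} (h : i' ≠ i) (s : ℝ) :
    phiT0 T i (epara T i' s) = 0 := by
  have hc : i' = i + 1 ∨ i' = i + 2 :=
    (by decide : ∀ i i' : Fin 3, i' ≠ i → i' = i + 1 ∨ i' = i + 2) i i' h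
  obtain ⟨h1i, h2i, h12, e11, e12, e21, e22⟩ := fin3_facts i
  rcases hc with rfl | rfl
  · have : T.lam (i + 1) (epara T (i + 1) s) = 0 := by
      rw [lam_seg, e11, e12, T.lam_apply, T.lam_apply, if_neg h12, if_neg h1i]
      ring
    simp [phiT0, this]
  · have : T.lam (i + 2) (epara T (i + 2) s) = 0 := by
      rw [lam_seg, e21, e22, T.lam_apply, T.lam_apply, if_neg h2i,
        if_neg (Ne.symm h12)]
      ring
    simp [phiT0, this]

lemma isPolyDeg_mul {k l : ℕ} {f g : V2 → ℝ} (hf : IsPolyDeg k f)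
    (hg : IsPolyDeg l g) : IsPolyDeg (k + l) fun x => f x * g x := by
  obtain ⟨p, hp, hep⟩ := hf
  obtain ⟨q, hq, heq⟩ := hg
  exact ⟨p * q, le_trans (MvPolynomial.totalDegree_mul p q) (add_le_add hp hq),
    fun x => by simp [hep, heq]⟩

lemma isPolyDeg_const_mul {k : ℕ} (c : ℝ) {f : V2 → ℝ} (hf : IsPolyDeg k f) :
    IsPolyDeg k fun x => c * f x := by
  obtain ⟨p, hp, hep⟩ := hf
  refine ⟨MvPolynomial.C c * p, ?_, fun x => by simp [hep]⟩
  refine le_trans (MvPolynomial.totalDegree_mul _ _) ?_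
  simpa [MvPolynomial.totalDegree_C] using hp

lemma lam_isPoly (T : Triangle) (m : Fin 3) : IsPolyDeg 1 (T.lam m) := by
  obtain ⟨L, c, h⟩ := T.lam_affine m
  refine ⟨MvPolynomial.C (L (1, 0)) * MvPolynomial.X 0 +
    MvPolynomial.C (L (0, 1)) * MvPolynomial.X 1 + MvPolynomial.C c, ?_, ?_⟩
  · refine le_trans (MvPolynomial.totalDegree_add _ _) (max_le ?_ ?_)
    · refine le_trans (MvPolynomial.totalDegree_add _ _) (max_le ?_ ?_) <;>
      · refine le_trans (MvPolynomial.totalDegree_mul _ _) ?_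
        simp [MvPolynomial.totalDegree_C, MvPolynomial.totalDegree_X]
    · simp [MvPolynomial.totalDegree_C]
  · intro x
    have hx : (x : V2) = x.1 • ((1 : ℝ), (0 : ℝ)) + x.2 • ((0 : ℝ), (1 : ℝ)) := by
      ext <;> simp
    rw [h]
    conv_lhs => rw [hx]
    simp only [L.map_add, L.map_smul, smul_eq_mul]
    simp
    ring

lemma dot2_tang_self (T : Triangle) (i : Fin 3) :
    dot2 (T.tang i) (T.tang i) = 1 := by
  have h := T.tang_unit i
  unfold enorm2 at h
  have h2 : (T.tang i).1 ^ 2 + (T.tang i).2 ^ 2 = 1 := by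
    have := Real.sqrt_eq_one.mp h
    linarith
  unfold dot2
  nlinarith [h2]

lemma integral_six : (∫ s in (0:ℝ)..1, 6 * (1 - s) * s) = 1 := by
  have h : ∀ s : ℝ, 6 * (1 - s) * s = 6 * s - 6 * s ^ 2 := fun s => by ring
  simp only [h]
  rw [intervalIntegral.integral_sub
    (Continuous.intervalIntegrable (by continuity) _ _)
    (Continuous.intervalIntegrable (by continuity) _ _),
    intervalIntegral.integral_const_mul, intervalIntegral.integral_const_mul,
    integral_id, integral_pow]
  norm_num

/-- `φ_{t_i,0} ∈ P^{2-}(T)`, its mean tangential component over `e_i` is `1`,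
and all eight other sBDFM nodal functionals vanish on it. -/
theorem stmt9 (T : Triangle) (i : Fin 3) :
    memP2m T (phiT0 T i) ∧
    fT0 T i (phiT0 T i) = 1 ∧ fN0 T i (phiT0 T i) = 0 ∧ fN1 T i (phiT0 T i) = 0 ∧
    ∀ i' : Fin 3, i' ≠ i →
      fN0 T i' (phiT0 T i) = 0 ∧ fN1 T i' (phiT0 T i) = 0 ∧ fT0 T i' (phiT0 T i) = 0 :=  by
  obtain ⟨h1i, h2i, h12, -⟩ := fin3_facts i
  have hnt : dot2 (T.tang i) (T.nrm i) = 0 := by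
    rw [dot2_comm']; exact T.nrm_orth i
  have hzero_self : ∀ s : ℝ, dot2 (phiT0 T i (epara T i s)) (T.nrm i) = 0 := by
    intro s
    rw [phi_edge_self, dot2_smul', hnt, mul_zero]
  refine ⟨⟨?_, ?_⟩, ?_, ?_, ?_, ?_⟩
  · -- IsVPolyDeg 2
    have hpoly : ∀ c : ℝ, IsPolyDeg 2 fun x =>
        (6 * T.lam (i + 1) x * T.lam (i + 2) x) * c := by
      intro c
      have h2 : IsPolyDeg 2 fun x => T.lam (i + 1) x * T.lam (i + 2) x :=
        isPolyDeg_mul (lam_isPoly T (i + 1)) (lam_isPoly T (i + 2))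
      have := isPolyDeg_const_mul (6 * c) h2
      have heq : (fun x => (6 * c) * (T.lam (i + 1) x * T.lam (i + 2) x)) =
          fun x => (6 * T.lam (i + 1) x * T.lam (i + 2) x) * c := by
        funext x; ring
      rwa [heq] at this
    constructor
    · have heq : (fun x => (phiT0 T i x).1) =
          fun x => (6 * T.lam (i + 1) x * T.lam (i + 2) x) * (T.tang i).1 := by
        funext x; simp [phiT0, Prod.smul_def, smul_eq_mul]
      rw [heq]; exact hpoly _
    · have heq : (fun x => (phiT0 T i x).2) =
          fun x => (6 * T.lam (i + 1) x * T.lam (i + 2) x) * (T.tang i).2 := by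
        funext x; simp [phiT0, Prod.smul_def, smul_eq_mul]
      rw [heq]; exact hpoly _
  · -- NormalP1
    intro i'
    refine ⟨0, 0, fun s _ => ?_⟩
    by_cases hi : i' = i
    · subst hi
      rw [hzero_self]; ring
    · rw [phi_edge_other T hi, dot2_zero_left]; ring
  · -- fT0 = 1
    unfold fT0
    have : ∀ s : ℝ, dot2 (phiT0 T i (epara T i s)) (T.tang i) = 6 * (1 - s) * s := by
      intro s
      rw [phi_edge_self, dot2_smul', dot2_tang_self, mul_one]
    simp only [this]
    exact integral_six
  · -- fN0 = 0
    unfold fN0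
    simp only [hzero_self]
    simp
  · -- fN1 = 0
    unfold fN1
    simp only [hzero_self, zero_mul]
    simp
  · intro i' hi'
    have hz : ∀ s : ℝ, phiT0 T i (epara T i' s) = 0 := phi_edge_other T hi'
    refine ⟨?_, ?_, ?_⟩
    · unfold fN0
      simp only [hz, dot2_zero_left]
      simp
    · unfold fN1
      simp only [hz, dot2_zero_left, zero_mul]
      simp
    · unfold fT0
      simp only [hz, dot2_zero_left]
      simp
end
end

section
/- For a planar triangulation of a simply connected polygonal domain, with X^i the interior vertices, T^i the interior cells (triangles all of whose edges are interior), E^i the interior edges, and T all cells, if every boundary vertex is connected by an edge to an interior vertex then #T^i = 2·#X^i − 2, and consequently #X^i + #T^i = 3·#X^i − 2 = 3·#E^i − (3·#T − 1). -/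
open scoped Classical

noncomputable section

/-- An abstract (combinatorial) model of a triangulation of a simply connected
polygonal domain in the plane: vertices `Fin nX`, edges `Fin nE` (each with two
endpoints), triangular cells `Fin nC` (each with three sides), together with the
designated boundary vertices and boundary edges, and the standard facts valid for
such triangulations: Euler's formula `#X − #E + #C = 1`, the boundary is a cycle
(`#X^b = #E^b`), endpoints of boundary edges are boundary vertices, every boundary
edge lies in exactly one cell and every interior edge in exactly two, any two sides
of a cell share a vertex, and the fan property at a boundary vertex: if a single
cell contains two boundary edges through a boundary vertex `v`, then all edges
through `v` are boundary edges. -/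
structure CombTriangulation where
  nX : ℕ
  nE : ℕ
  nC : ℕ
  ends : Fin nE → Finset (Fin nX)
  sides : Fin nC → Finset (Fin nE)
  bdV : Finset (Fin nX)
  bdE : Finset (Fin nE)
  ends_card : ∀ e, (ends e).card = 2
  sides_card : ∀ c, (sides c).card = 3
  sides_inj : Function.Injective sides
  bdE_sub : ∀ e ∈ bdE, ends e ⊆ bdV
  euler : (nX : ℤ) - (nE : ℤ) + (nC : ℤ) = 1
  bd_count : bdV.card = bdE.card
  bd_in_one : ∀ e ∈ bdE, ∃! c : Fin nC, e ∈ sides c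
  int_in_two : ∀ e : Fin nE, e ∉ bdE →
    (Finset.univ.filter fun c : Fin nC => e ∈ sides c).card = 2
  sides_share : ∀ c, ∀ e₁ ∈ sides c, ∀ e₂ ∈ sides c, e₁ ≠ e₂ →
    (ends e₁ ∩ ends e₂).Nonempty
  fan : ∀ v ∈ bdV, ∀ c : Fin nC,
    2 ≤ ((sides c).filter fun e => e ∈ bdE ∧ v ∈ ends e).card →
    ∀ e : Fin nE, v ∈ ends e → e ∈ bdE

namespace CombTriangulation

variable (M : CombTriangulation)

/-- interior vertices `X^i` -/
def intV : Finset (Fin M.nX) := Finset.univ \ M.bdV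

/-- interior edges `E^i` -/
def intE : Finset (Fin M.nE) := Finset.univ \ M.bdE

/-- interior cells `T^i`: cells all of whose edges are interior -/
def intC : Finset (Fin M.nC) :=
  Finset.univ.filter fun c => ∀ e ∈ M.sides c, e ∉ M.bdE

end CombTriangulation

/-- if every boundary vertex is connected by an edge to an interior
vertex, then `#T^i = 2 #X^i − 2`, and consequently
`#X^i + #T^i = 3 #X^i − 2 = 3 #E^i − (3 #T − 1)`. -/
theorem stmt11 (M : CombTriangulation)
    (h : ∀ v ∈ M.bdV, ∃ e : Fin M.nE, v ∈ M.ends e ∧ ∃ w ∈ M.ends e, w ∉ M.bdV) :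
    ((M.intC.card : ℤ) = 2 * (M.intV.card : ℤ) - 2) ∧
    ((M.intV.card : ℤ) + (M.intC.card : ℤ) = 3 * (M.intV.card : ℤ) - 2) ∧
    (3 * (M.intV.card : ℤ) - 2 = 3 * (M.intE.card : ℤ) - (3 * (M.nC : ℤ) - 1)) := by
  classical
  -- no cell contains two distinct boundary edges
  have key : ∀ c : Fin M.nC, ∀ e₁ ∈ M.sides c, ∀ e₂ ∈ M.sides c,
      e₁ ∈ M.bdE → e₂ ∈ M.bdE → e₁ = e₂ := by
    intro c e₁ h₁ e₂ h₂ hb₁ hb₂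
    by_contra hne
    obtain ⟨v, hv⟩ := M.sides_share c e₁ h₁ e₂ h₂ hne
    rw [Finset.mem_inter] at hv
    have hvb : v ∈ M.bdV := M.bdE_sub e₁ hb₁ hv.1
    have h2 : 2 ≤ ((M.sides c).filter fun e => e ∈ M.bdE ∧ v ∈ M.ends e).card := by
      have hsub : ({e₁, e₂} : Finset (Fin M.nE)) ⊆
          (M.sides c).filter fun e => e ∈ M.bdE ∧ v ∈ M.ends e := by
        intro x hx
        rcases Finset.mem_insert.1 hx with rfl | hx
        · exact Finset.mem_filter.2 ⟨h₁, hb₁, hv.1⟩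
        · rw [Finset.mem_singleton] at hx; subst hx
          exact Finset.mem_filter.2 ⟨h₂, hb₂, hv.2⟩
      calc 2 = ({e₁, e₂} : Finset (Fin M.nE)).card := (Finset.card_pair hne).symm
        _ ≤ _ := Finset.card_le_card hsub
    obtain ⟨e, hve, w, hwe, hw⟩ := h v hvb
    exact hw (M.bdE_sub e (M.fan v hvb c h2 e hve) hwe)
  -- boundary edges biject with non-interior cells
  have hnon : M.bdE.card = (Finset.univ \ M.intC).card := by
    apply Finset.card_bij (fun e he => (M.bd_in_one e he).choose)
    · intro e he
      have hspec := (M.bd_in_one e he).choose_spec.1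
      simp only [CombTriangulation.intC, Finset.mem_sdiff, Finset.mem_univ,
        Finset.mem_filter, true_and]
      push_neg
      exact ⟨e, hspec, he⟩
    · intro e₁ he₁ e₂ he₂ heq
      have h1 := (M.bd_in_one e₁ he₁).choose_spec.1
      have h2 := (M.bd_in_one e₂ he₂).choose_spec.1
      rw [heq] at h1
      exact key _ e₁ h1 e₂ h2 he₁ he₂
    · intro c hc
      simp only [CombTriangulation.intC, Finset.mem_sdiff, Finset.mem_univ,
        Finset.mem_filter, true_and] at hc
      push_neg at hc
      obtain ⟨e, hec, hbe⟩ := hc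
      refine ⟨e, hbe, ?_⟩
      exact ((M.bd_in_one e hbe).choose_spec.2 c hec).symm
  -- double counting: 3 * nC = #bdE + 2 * #intE
  have hcount : 3 * M.nC = M.bdE.card + 2 * M.intE.card := by
    have hlhs : ∑ c : Fin M.nC, (M.sides c).card = 3 * M.nC := by
      simp [M.sides_card, Finset.sum_const, mul_comm]
    have hswap : ∑ c : Fin M.nC, (M.sides c).card
        = ∑ e : Fin M.nE, (Finset.univ.filter fun c : Fin M.nC => e ∈ M.sides c).card := by
      simp_rw [Finset.card_filter]
      rw [Finset.sum_comm]
      refine Finset.sum_congr rfl fun c _ => ?_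
      rw [← Finset.card_filter, Finset.filter_univ_mem]
    have hsplit : ∑ e : Fin M.nE, (Finset.univ.filter fun c : Fin M.nC => e ∈ M.sides c).card
        = M.bdE.card + 2 * M.intE.card := by
      rw [← Finset.sum_sdiff (Finset.subset_univ M.bdE)]
      have h1 : ∑ e ∈ Finset.univ \ M.bdE,
          (Finset.univ.filter fun c : Fin M.nC => e ∈ M.sides c).card = 2 * M.intE.card := by
        rw [Finset.sum_congr rfl (fun e he => M.int_in_two e (Finset.mem_sdiff.1 he).2)]
        simp [CombTriangulation.intE, mul_comm]
      have h2 : ∑ e ∈ M.bdE,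
          (Finset.univ.filter fun c : Fin M.nC => e ∈ M.sides c).card = M.bdE.card := by
        rw [Finset.sum_congr rfl (fun e he => ?_), Finset.sum_const, smul_eq_mul, mul_one]
        obtain ⟨c, hc, huniq⟩ := M.bd_in_one e he
        rw [Finset.card_eq_one]
        exact ⟨c, Finset.eq_singleton_iff_unique_mem.2
          ⟨Finset.mem_filter.2 ⟨Finset.mem_univ c, hc⟩,
           fun x hx => huniq x (Finset.mem_filter.1 hx).2⟩⟩
      rw [h1, h2]; ring
    rw [← hsplit, ← hswap, hlhs]
  have hc1 : (Finset.univ \ M.intC).card = M.nC - M.intC.card := by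
    rw [Finset.card_sdiff_of_subset (Finset.subset_univ _)]; simp
  have hc2 : M.intC.card ≤ M.nC := le_trans (Finset.card_le_univ _) (by simp)
  have he1 : M.intE.card = M.nE - M.bdE.card := by
    rw [CombTriangulation.intE, Finset.card_sdiff_of_subset (Finset.subset_univ _)]; simp
  have he2 : M.bdE.card ≤ M.nE := le_trans (Finset.card_le_univ _) (by simp)
  have hv1 : M.intV.card = M.nX - M.bdV.card := by
    rw [CombTriangulation.intV, Finset.card_sdiff_of_subset (Finset.subset_univ _)]; simp
  have hv2 : M.bdV.card ≤ M.nX := le_trans (Finset.card_le_univ _) (by simp)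
  have heuler := M.euler
  have hbd := M.bd_count
  refine ⟨by omega, by omega, by omega⟩
end
end
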